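/- arXiv:2205.02495 — 8 statements merged into one kernel-verified Lean document; each statement's English description precedes it below -/
import Mathlib

section
/- The two matrices [[1,0],[-1,1]] and [[1,1],[0,1]] generate the full special linear group SL(2, Z/nZ) for every positive integer n. -/
open Matrix

namespace SL2GenAux

variable {n : ℕ} [NeZero n]

abbrev SL2 (n : ℕ) := Matrix.SpecialLinearGroup (Fin 2) (ZMod n)

/-- Constructor from entries. -/
def mk (a b c d : ZMod n) (h : a * d - b * c = 1) : SL2 n :=
  ⟨!![a, b; c, d], by rw [Matrix.det_fin_two_of]; linear_combination h⟩

def E12 (x : ZMod n) : SL2 n := mk 1 x 0 1 (by ring)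
def E21 (x : ZMod n) : SL2 n := mk 1 0 x 1 (by ring)

lemma mk_mul (a b c d h a' b' c' d' h') :
    (mk a b c d h : SL2 n) * mk a' b' c' d' h' =
      mk (a * a' + b * c') (a * b' + b * d') (c * a' + d * c') (c * b' + d * d')
        (by linear_combination (a' * d' - b' * c') * h + h') := by
  apply Subtype.ext
  rw [Matrix.SpecialLinearGroup.coe_mul]
  simp [mk, Matrix.mul_fin_two]

lemma mk_eq_mk {a b c d h a' b' c' d' h'} (ha : a = a') (hb : b = b') (hc : c = c')
    (hd : d = d') : (mk a b c d h : SL2 n) = mk a' b' c' d' h' := by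
  subst ha hb hc hd; rfl

lemma E12_mul (x y : ZMod n) : E12 x * E12 y = E12 (x + y) := by
  rw [E12, E12, mk_mul _ _ _ _ _ _ _ _ _ _]
  exact mk_eq_mk (by ring) (by ring) (by ring) (by ring)

lemma E21_mul (x y : ZMod n) : E21 x * E21 y = E21 (x + y) := by
  rw [E21, E21, mk_mul _ _ _ _ _ _ _ _ _ _]
  exact mk_eq_mk (by ring) (by ring) (by ring) (by ring)

lemma E12_pow (x : ZMod n) (m : ℕ) : (E12 x) ^ m = E12 ((m : ZMod n) * x) := by
  induction m with
  | zero => apply Subtype.ext; rw [Matrix.SpecialLinearGroup.coe_pow]; simp [E12, mk, Matrix.one_fin_two]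
  | succ k ih => rw [pow_succ, ih, E12_mul]; push_cast; ring_nf

lemma E21_pow (x : ZMod n) (m : ℕ) : (E21 x) ^ m = E21 ((m : ZMod n) * x) := by
  induction m with
  | zero => apply Subtype.ext; rw [Matrix.SpecialLinearGroup.coe_pow]; simp [E21, mk, Matrix.one_fin_two]
  | succ k ih => rw [pow_succ, ih, E21_mul]; push_cast; ring_nf

/-- The closure in question. -/
def H (n : ℕ) : Subgroup (SL2 n) := Subgroup.closure {E21 (-1), E12 1}

lemma E12_mem (x : ZMod n) : E12 x ∈ H n := by
  have h1 : E12 (1 : ZMod n) ∈ H n := Subgroup.subset_closure (by simp [H])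
  have := Subgroup.pow_mem _ h1 x.val
  rwa [E12_pow, mul_one, ZMod.natCast_val, ZMod.cast_id] at this

lemma E21_mem (x : ZMod n) : E21 x ∈ H n := by
  have h1 : E21 (-1 : ZMod n) ∈ H n := Subgroup.subset_closure (by simp [H])
  have := Subgroup.pow_mem _ h1 (-x).val
  rw [E21_pow] at this
  rwa [ZMod.natCast_val, ZMod.cast_id, mul_neg_one, neg_neg] at this

lemma w_mem (u v : ZMod n) (h : u * v = 1) (h') :
    (mk 0 u (-v) 0 h' : SL2 n) ∈ H n := by
  have : (mk 0 u (-v) 0 h' : SL2 n) = E12 u * E21 (-v) * E12 u := by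
    rw [E12, E21, mk_mul _ _ _ _ _ _ _ _ _ _,
      mk_mul _ _ _ _ _ _ _ _ _ _]
    symm
    exact mk_eq_mk (by linear_combination -h) (by linear_combination -u * h)
      (by ring) (by linear_combination -h)
  rw [this]
  exact Subgroup.mul_mem _ (Subgroup.mul_mem _ (E12_mem u) (E21_mem (-v))) (E12_mem u)

lemma diag_mem (u v : ZMod n) (h : u * v = 1) (h') :
    (mk u 0 0 v h' : SL2 n) ∈ H n := by
  have h1 := w_mem u v h (by linear_combination h)
  have h2 := w_mem (-1 : ZMod n) (-1) (by ring) (by ring)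
  have : (mk u 0 0 v h' : SL2 n) =
      mk 0 u (-v) 0 (by linear_combination h) * mk 0 (-1) (-(-1)) 0 (by ring) := by
    rw [mk_mul _ _ _ _ _ _ _ _ _ _]
    exact mk_eq_mk (by ring) (by ring) (by ring) (by ring)
  rw [this]
  exact Subgroup.mul_mem _ h1 h2

end SL2GenAux

namespace SL2GenAux

variable {n : ℕ} [NeZero n]

lemma entry_mk (a b c d : ZMod n) (h) : ((mk a b c d h : SL2 n) : Matrix (Fin 2) (Fin 2) (ZMod n)) 1 0 = c := by
  simp [mk]

lemma main : ∀ m : ℕ, ∀ A : SL2 n,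
    ((A : Matrix (Fin 2) (Fin 2) (ZMod n)) 1 0).val = m → A ∈ H n := by
  intro m
  induction m using Nat.strong_induction_on with
  | _ m ih =>
    intro A hA
    set a : ZMod n := (A : Matrix (Fin 2) (Fin 2) (ZMod n)) 0 0 with ha
    set b : ZMod n := (A : Matrix (Fin 2) (Fin 2) (ZMod n)) 0 1 with hb
    set c : ZMod n := (A : Matrix (Fin 2) (Fin 2) (ZMod n)) 1 0 with hc
    set d : ZMod n := (A : Matrix (Fin 2) (Fin 2) (ZMod n)) 1 1 with hd
    have hdet : a * d - b * c = 1 := by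
      have := A.2
      rw [Matrix.det_fin_two] at this
      exact this
    have hAeq : A = mk a b c d hdet := Subtype.ext (Matrix.etaExpand_eq _).symm
    rcases Nat.eq_zero_or_pos m with hm | hm
    · -- c = 0
      have hc0 : c = 0 := by
        rw [← ZMod.val_eq_zero, hA, hm]
      have had : a * d = 1 := by linear_combination hdet + b * hc0
      have : A = mk a 0 0 d (by linear_combination had) * E12 (d * b) := by
        rw [E12, mk_mul _ _ _ _ _ _ _ _ _ _, hAeq]
        exact mk_eq_mk (by ring) (by linear_combination -b * had) (by rw [hc0]; ring) (by ring)
      rw [this]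
      exact Subgroup.mul_mem _ (diag_mem a d had _) (E12_mem _)
    · -- c ≠ 0, Euclidean step
      set q : ℕ := a.val / m with hq
      have hcast : ((a.val % m : ℕ) : ZMod n) = a - (q : ZMod n) * c := by
        have h1 : (a.val : ZMod n) = a := by rw [ZMod.natCast_val, ZMod.cast_id]
        have h2 : ((m : ℕ) : ZMod n) = c := by rw [← hA, ZMod.natCast_val, ZMod.cast_id]
        have h3 : m * q + a.val % m = a.val := Nat.div_add_mod a.val m
        calc ((a.val % m : ℕ) : ZMod n) = ((m * q + a.val % m : ℕ) : ZMod n) - (q : ZMod n) * ((m : ℕ) : ZMod n) := by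
              push_cast; ring
        _ = a - (q : ZMod n) * c := by rw [h3, h1, h2]
      have hval : (a - (q : ZMod n) * c).val = a.val % m := by
        rw [← hcast]
        apply ZMod.val_cast_of_lt
        exact lt_of_lt_of_le (Nat.mod_lt _ hm) (by rw [← hA]; exact (ZMod.val_lt c).le)
      set B : SL2 n := mk 0 (-1) 1 0 (by ring) * (E12 (-(q : ZMod n)) * A) with hB
      have hBentry : ((B : Matrix (Fin 2) (Fin 2) (ZMod n)) 1 0).val = a.val % m := by
        have : B = mk (-c) (-d) (a - (q : ZMod n) * c) (b - (q : ZMod n) * d)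
            (by linear_combination hdet) := by
          rw [hB, hAeq, E12, mk_mul _ _ _ _ _ _ _ _ _ _,
            mk_mul _ _ _ _ _ _ _ _ _ _]
          exact mk_eq_mk (by ring) (by ring) (by ring) (by ring)
        rw [this, entry_mk, hval]
      have hBmem : B ∈ H n := ih _ (Nat.mod_lt _ hm) B hBentry
      have hS : (mk 0 (-1) 1 0 (by ring) : SL2 n) ∈ H n := by
        have := w_mem (-1 : ZMod n) (-1) (by ring) (by ring)
        have heq : (mk 0 (-1) (-(-1)) 0 (by ring) : SL2 n) = mk 0 (-1) 1 0 (by ring) :=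
          mk_eq_mk rfl rfl (by ring) rfl
        rwa [heq] at this
      have hArec : A = (E12 (-(q : ZMod n)))⁻¹ * ((mk 0 (-1) 1 0 (by ring) : SL2 n)⁻¹ * B) := by
        rw [hB]
        group
      rw [hArec]
      exact Subgroup.mul_mem _ (Subgroup.inv_mem _ (E12_mem _))
        (Subgroup.mul_mem _ (Subgroup.inv_mem _ hS) hBmem)

lemma mem_H (A : SL2 n) : A ∈ H n := main _ A rfl

end SL2GenAux

/-- The matrices `[[1,0],[-1,1]]` and `[[1,1],[0,1]]` generate `SL(2, ℤ/nℤ)`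
for every positive integer `n`. -/
theorem sl2_generated_by_two_elementary_matrices (n : ℕ) (hn : 0 < n) :
    Subgroup.closure
      ({⟨!![1, 0; -1, 1], by simp [Matrix.det_fin_two_of]⟩,
        ⟨!![1, 1; 0, 1], by simp [Matrix.det_fin_two_of]⟩} :
        Set (Matrix.SpecialLinearGroup (Fin 2) (ZMod n))) = ⊤ := by
  haveI : NeZero n := ⟨hn.ne'⟩
  have hset : ({⟨!![1, 0; -1, 1], by simp [Matrix.det_fin_two_of]⟩,
        ⟨!![1, 1; 0, 1], by simp [Matrix.det_fin_two_of]⟩} :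
        Set (Matrix.SpecialLinearGroup (Fin 2) (ZMod n))) =
      {SL2GenAux.E21 (-1), SL2GenAux.E12 1} := rfl
  rw [hset]
  rw [eq_top_iff]
  intro A _
  exact SL2GenAux.mem_H A
end

section
/- Let G̃ be a group with central element h, let p : G̃ → Q be a surjective homomorphism with kernel generated by h (infinite cyclic), and let Γ ≤ G̃ be a subgroup of finite index n such that p restricted to Γ is surjective. Then Γ ∩ ⟨h⟩ = ⟨hⁿ⟩, Γ is normal in G̃, and G̃/Γ is cyclic of order n. -/
/-- Let `G` be a group with a central element `h` of infinite order, `p : G → Q`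
a surjective homomorphism with kernel `⟨h⟩`, and `Γ ≤ G` a subgroup of finite
index `n` mapping onto `Q`.  Then `Γ ∩ ⟨h⟩ = ⟨hⁿ⟩`, `Γ` is normal in `G`, and
`G/Γ` is cyclic (of order `n`, since the index of `Γ` is `n`). -/
theorem index_n_subgroup_along_fiber {G Q : Type*} [Group G] [Group Q]
    (h : G) (hcent : h ∈ Subgroup.center G) (hinf : ¬ IsOfFinOrder h)
    (p : G →* Q) (hp : Function.Surjective p)
    (hker : p.ker = Subgroup.zpowers h)
    (Γ : Subgroup G) (n : ℕ) (hn : 0 < n) (hidx : Γ.index = n)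
    (hsurj : ∀ q : Q, ∃ γ ∈ Γ, p γ = q) :
    Γ ⊓ Subgroup.zpowers h = Subgroup.zpowers (h ^ n) ∧
    Γ.Normal ∧
    ∃ g : G, ∀ x : G, ∃ k : ℤ, x * (g ^ k)⁻¹ ∈ Γ := by
  -- powers of `h` are central
  have hc : ∀ (k : ℤ) (x : G), x * h ^ k = h ^ k * x := fun k x =>
    Subgroup.mem_center_iff.mp (Subgroup.zpow_mem _ hcent k) x
  -- decomposition of an arbitrary element
  have decomp : ∀ g : G, ∃ (k : ℤ) (γ : G), γ ∈ Γ ∧ g = h ^ k * γ := by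
    intro g
    obtain ⟨γ, hγΓ, hpγ⟩ := hsurj (p g)
    have hker' : g * γ⁻¹ ∈ p.ker := by
      simp [MonoidHom.mem_ker, hpγ]
    rw [hker] at hker'
    obtain ⟨k, hk⟩ := hker'
    have hk' : h ^ k = g * γ⁻¹ := hk
    exact ⟨k, γ, hγΓ, by rw [hk']; group⟩
  -- normality
  have hN : Γ.Normal := by
    constructor
    intro x hx g
    obtain ⟨k, γ, hγ, rfl⟩ := decomp g
    have key : h ^ k * γ * x * (h ^ k * γ)⁻¹ = γ * x * γ⁻¹ := by
      calc h ^ k * γ * x * (h ^ k * γ)⁻¹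
          = h ^ k * (γ * x * γ⁻¹) * (h ^ k)⁻¹ := by group
        _ = (γ * x * γ⁻¹) * h ^ k * (h ^ k)⁻¹ := by rw [hc k (γ * x * γ⁻¹)]
        _ = γ * x * γ⁻¹ := by group
    rw [key]
    exact Γ.mul_mem (Γ.mul_mem hγ hx) (Γ.inv_mem hγ)
  haveI := hN
  set q : G →* G ⧸ Γ := QuotientGroup.mk' Γ with hq
  have hmk : ∀ (y : G) (k : ℤ), y ∈ Γ → q (h ^ k * y) = q h ^ k := by
    intro y k hy
    rw [map_mul, map_zpow]
    have : q y = 1 := (QuotientGroup.eq_one_iff y).mpr hy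
    rw [this, mul_one]
  have hord : orderOf (q h) = n := by
    have htop : Subgroup.zpowers (q h) = ⊤ := by
      rw [eq_top_iff]
      rintro x -
      induction x using QuotientGroup.induction_on with
      | H g =>
        obtain ⟨k, γ, hγ, rfl⟩ := decomp g
        exact ⟨k, (hmk γ k hγ).symm⟩
    have h1 : Nat.card (Subgroup.zpowers (q h)) = orderOf (q h) :=
      Nat.card_zpowers (q h)
    rw [htop] at h1
    have h2 : Nat.card ((⊤ : Subgroup (G ⧸ Γ))) = Nat.card (G ⧸ Γ) :=
      Nat.card_congr Subgroup.topEquiv.toEquiv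
    rw [h2] at h1
    have h3 : Nat.card (G ⧸ Γ) = Γ.index := rfl
    omega
  have hpow : h ^ n ∈ Γ := by
    have : q (h ^ n) = 1 := by
      rw [map_pow, ← hord, pow_orderOf_eq_one]
    exact (QuotientGroup.eq_one_iff _).mp this
  refine ⟨?_, hN, ⟨h, ?_⟩⟩
  · apply le_antisymm
    · rintro x ⟨hxΓ, j, rfl⟩
      have h1 : q h ^ j = 1 := by
        rw [← map_zpow]
        exact (QuotientGroup.eq_one_iff _).mpr hxΓ
      have h2 : ((n : ℤ)) ∣ j := by
        rw [← hord]
        exact orderOf_dvd_iff_zpow_eq_one.mpr h1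
      obtain ⟨m, rfl⟩ := h2
      refine ⟨m, ?_⟩
      show (h ^ n) ^ m = h ^ ((n : ℤ) * m)
      rw [← zpow_natCast h n, ← zpow_mul]
    · rw [Subgroup.zpowers_le]
      exact ⟨hpow, ⟨(n : ℤ), zpow_natCast h n⟩⟩
  · intro x
    obtain ⟨k, γ, hγ, rfl⟩ := decomp x
    refine ⟨k, ?_⟩
    have : h ^ k * γ * (h ^ k)⁻¹ = γ := by
      rw [← hc k γ]; group
    rwa [this]
end

section
/- Let G̃ be a group with central element h of infinite order, p : G̃ → Q surjective with kernel ⟨h⟩, and let Γ, Γ' be subgroups of index n in G̃ each mapping onto Q under p. Then the map α : Q → Z/nZ defined by requiring h^{a(γ)}γ ∈ Γ' for γ ∈ Γ with p(γ) = q (where α(q) = a(γ) mod n) is a well-defined group homomorphism. -/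
/-- For a subgroup `Δ` of index `n` surjecting onto `Q`, a power `h ^ k`
lies in `Δ` only when `n ∣ k`. -/
theorem aux_pow_mem_dvd {G Q : Type*} [Group G] [Group Q]
    (h : G) (p : G →* Q)
    (hker : p.ker = Subgroup.zpowers h)
    (Δ : Subgroup G) (n : ℕ)
    (hidx : Δ.index = n)
    (hsurjΔ : ∀ q : Q, ∃ γ ∈ Δ, p γ = q) :
    ∀ k : ℤ, h ^ k ∈ Δ → (n : ℤ) ∣ k := by
  classical
  -- the additive subgroup of exponents landing in Δ
  set S : AddSubgroup ℤ :=
    { carrier := {k : ℤ | h ^ k ∈ Δ}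
      zero_mem' := by
        show h ^ (0 : ℤ) ∈ Δ
        simpa using Δ.one_mem
      add_mem' := by
        intro a b ha hb
        simpa [zpow_add] using mul_mem ha hb
      neg_mem' := by
        intro a ha
        show h ^ (-a) ∈ Δ
        simpa [zpow_neg] using Δ.inv_mem (ha : h ^ a ∈ Δ) } with hS
  have memS : ∀ k : ℤ, k ∈ S ↔ h ^ k ∈ Δ := fun k => Iff.rfl
  -- map ℤ ⧸ S → G ⧸ Δ
  have hfun : ∀ (k l : ℤ), (QuotientAddGroup.leftRel S).r k l →
      (QuotientGroup.mk (h ^ k) : G ⧸ Δ) = QuotientGroup.mk (h ^ l) := by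
    intro k l hkl
    rw [QuotientAddGroup.leftRel_apply] at hkl
    rw [QuotientGroup.eq]
    have : h ^ (-k + l) ∈ Δ := hkl
    simpa [zpow_add, zpow_neg] using this
  let f : ℤ ⧸ S → G ⧸ Δ := Quotient.lift (fun k => (QuotientGroup.mk (h ^ k) : G ⧸ Δ)) hfun
  have hbij : Function.Bijective f := by
    constructor
    · intro x y
      refine Quotient.inductionOn₂ x y ?_
      intro k l hkl
      have : (QuotientGroup.mk (h ^ k) : G ⧸ Δ) = QuotientGroup.mk (h ^ l) := hkl
      rw [QuotientGroup.eq] at this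
      exact Quotient.sound (QuotientAddGroup.leftRel_apply.mpr
        (show h ^ (-k + l) ∈ Δ by simpa [zpow_add, zpow_neg] using this))
    · intro x
      refine Quotient.inductionOn x ?_
      intro g
      obtain ⟨γ, hγ, hpγ⟩ := hsurjΔ (p g)
      have hmem : g * γ⁻¹ ∈ p.ker := by
        rw [MonoidHom.mem_ker, map_mul, map_inv, hpγ, mul_inv_cancel]
      rw [hker] at hmem
      obtain ⟨k, hk⟩ := Subgroup.mem_zpowers_iff.mp hmem
      refine ⟨Quotient.mk _ k, ?_⟩
      show (QuotientGroup.mk (h ^ k) : G ⧸ Δ) = QuotientGroup.mk g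
      rw [QuotientGroup.eq, hk]
      simpa using hγ
  -- so S has index n
  have hSidx : S.index = n := by
    rw [AddSubgroup.index, Nat.card_congr (Equiv.ofBijective f hbij)]
    exact hidx
  obtain ⟨m, hm⟩ := Int.subgroup_cyclic S
  rw [← AddSubgroup.zmultiples_eq_closure] at hm
  have hmn : m.natAbs = n := by rw [hm, Int.index_zmultiples] at hSidx; exact hSidx
  intro k hk
  have : k ∈ S := hk
  rw [hm, AddSubgroup.mem_zmultiples_iff] at this
  obtain ⟨c, hc⟩ := this
  have : m ∣ k := ⟨c, by rw [← hc, smul_eq_mul]; ring⟩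
  rw [← hmn]
  exact (Int.natAbs_dvd).mpr this

/-- Given two index-`n` subgroups `Γ, Γ'` of `G` each surjecting onto `Q` under
`p` (where `h` is central of infinite order and `ker p = ⟨h⟩`), the assignment
`α : Q → ℤ/nℤ` defined by requiring `h^a · γ ∈ Γ'` for `γ ∈ Γ` with `p γ = q`
(setting `α(q) = a mod n`) is a well-defined group homomorphism. -/
theorem comparison_map_is_well_defined_hom {G Q : Type*} [Group G] [Group Q]
    (h : G) (hcent : h ∈ Subgroup.center G) (hinf : ¬ IsOfFinOrder h)
    (p : G →* Q) (hp : Function.Surjective p)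
    (hker : p.ker = Subgroup.zpowers h)
    (Γ Γ' : Subgroup G) (n : ℕ) (hn : 0 < n)
    (hidx : Γ.index = n) (hidx' : Γ'.index = n)
    (hsurj : ∀ q : Q, ∃ γ ∈ Γ, p γ = q)
    (hsurj' : ∀ q : Q, ∃ γ ∈ Γ', p γ = q) :
    ∃ α : Q → ZMod n,
      (∀ γ ∈ Γ, ∀ a : ℤ, h ^ a * γ ∈ Γ' → α (p γ) = (a : ZMod n)) ∧
      (∀ γ ∈ Γ, ∃ a : ℤ, h ^ a * γ ∈ Γ') ∧
      (∀ q q' : Q, α (q * q') = α q + α q') := by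
  classical
  have keyΓ := aux_pow_mem_dvd h p hker Γ n hidx hsurj
  have keyΓ' := aux_pow_mem_dvd h p hker Γ' n hidx' hsurj'
  -- existence
  have exist : ∀ γ ∈ Γ, ∃ a : ℤ, h ^ a * γ ∈ Γ' := by
    intro γ hγ
    obtain ⟨γ', hγ', hpγ'⟩ := hsurj' (p γ)
    have hmem : γ' * γ⁻¹ ∈ p.ker := by
      rw [MonoidHom.mem_ker, map_mul, map_inv, hpγ', mul_inv_cancel]
    rw [hker] at hmem
    obtain ⟨a, ha⟩ := Subgroup.mem_zpowers_iff.mp hmem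
    exact ⟨a, by rw [ha]; simpa using hγ'⟩
  -- well-definedness
  have W : ∀ γ ∈ Γ, ∀ δ ∈ Γ, p γ = p δ → ∀ a b : ℤ,
      h ^ a * γ ∈ Γ' → h ^ b * δ ∈ Γ' → (a : ZMod n) = (b : ZMod n) := by
    intro γ hγ δ hδ hpq a b ha hb
    have hmem : δ * γ⁻¹ ∈ p.ker := by
      rw [MonoidHom.mem_ker, map_mul, map_inv, ← hpq, mul_inv_cancel]
    rw [hker] at hmem
    obtain ⟨c, hc⟩ := Subgroup.mem_zpowers_iff.mp hmem
    have hcΓ : (n : ℤ) ∣ c := keyΓ c (by rw [hc]; exact mul_mem hδ (inv_mem hγ))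
    have hδγ : δ = h ^ c * γ := by rw [hc]; group
    have hb' : h ^ (b + c) * γ ∈ Γ' := by
      have : h ^ b * (h ^ c * γ) ∈ Γ' := by rw [← hδγ]; exact hb
      simpa [zpow_add, mul_assoc] using this
    have hdiff : h ^ (b + c - a) ∈ Γ' := by
      have := mul_mem hb' (inv_mem ha)
      have heq : h ^ (b + c) * γ * (h ^ a * γ)⁻¹ = h ^ (b + c - a) := by
        rw [mul_inv_rev, zpow_sub]
        group
      rwa [heq] at this
    have hd : (n : ℤ) ∣ b + c - a := keyΓ' _ hdiff
    have hba : (n : ℤ) ∣ b - a := by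
      have heq : b - a = (b + c - a) - c := by ring
      rw [heq]
      exact dvd_sub hd hcΓ
    exact (ZMod.intCast_eq_intCast_iff a b n).mpr (Int.modEq_iff_dvd.mpr hba)
  choose γ0 hγ0 hpγ0 using hsurj
  choose a0 ha0 using fun q => exist (γ0 q) (hγ0 q)
  refine ⟨fun q => ((a0 q : ℤ) : ZMod n), ?_, exist, ?_⟩
  · intro γ hγ a ha
    exact W (γ0 (p γ)) (hγ0 _) γ hγ (hpγ0 _) _ a (ha0 _) ha
  · intro q q'
    have h1 : γ0 q * γ0 q' ∈ Γ := mul_mem (hγ0 q) (hγ0 q')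
    have hcentb : ∀ b : ℤ, ∀ g : G, g * h ^ b = h ^ b * g := by
      intro b g
      exact Subgroup.mem_center_iff.mp ((Subgroup.center G).zpow_mem hcent b) g
    have h2 : h ^ (a0 q + a0 q') * (γ0 q * γ0 q') ∈ Γ' := by
      have hm := mul_mem (ha0 q) (ha0 q')
      have heq : h ^ a0 q * γ0 q * (h ^ a0 q' * γ0 q') =
          h ^ (a0 q + a0 q') * (γ0 q * γ0 q') := by
        rw [zpow_add]
        calc h ^ a0 q * γ0 q * (h ^ a0 q' * γ0 q')
            = h ^ a0 q * (γ0 q * h ^ a0 q') * γ0 q' := by group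
          _ = h ^ a0 q * (h ^ a0 q' * γ0 q) * γ0 q' := by rw [hcentb]
          _ = h ^ a0 q * h ^ a0 q' * (γ0 q * γ0 q') := by group
      rwa [heq] at hm
    have h3 : p (γ0 (q * q')) = p (γ0 q * γ0 q') := by
      rw [map_mul, hpγ0, hpγ0, hpγ0]
    have := W (γ0 (q * q')) (hγ0 _) _ h1 h3 (a0 (q * q')) (a0 q + a0 q') (ha0 _) h2
    show ((a0 (q * q') : ℤ) : ZMod n) = ((a0 q : ℤ) : ZMod n) + ((a0 q' : ℤ) : ZMod n)
    rw [this]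
    push_cast
    ring
end

section
/- Consider the affine action of a group on (Z/2Z)^{2g} = V₁ ⊕ ⋯ ⊕ V_g (each V_i = (Z/2Z)²) generated by: (a) for each i, the linear maps acting on V_i by [[1,0],[1,1]] and [[1,1],[0,1]] and trivially on V_j for j ≠ i; and (b) for each 1 ≤ i ≤ g−1, the affine map C_i acting trivially on V_j (j ≠ i, i+1) and on coordinates (α_i, β_i, α_{i+1}, β_{i+1}) by (α_i, β_i − α_i + α_{i+1} + 1, α_{i+1}, β_{i+1} + α_i − α_{i+1} − 1). Then the 'vanishing number' modulo 2 — the parity of the number of indices i with (α_i, β_i) = (0,0) — is invariant under this action. -/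
open Function

/-- The phase space `(ℤ/2ℤ)² ⊕ ⋯ ⊕ (ℤ/2ℤ)²` (`g` blocks). -/
abbrev ModTwoSpace (g : ℕ) := Fin g → ZMod 2 × ZMod 2

/-- `A_i`: the linear map acting on the `i`-th block by `[[1,0],[1,1]]`
(note `-1 = 1` in `ℤ/2ℤ`), trivially elsewhere. -/
def Amap2 (g : ℕ) (i : Fin g) : Function.End (ModTwoSpace g) :=
  fun v => Function.update v i ((v i).1, (v i).1 + (v i).2)

/-- `B_i`: the linear map acting on the `i`-th block by `[[1,1],[0,1]]`,
trivially elsewhere. -/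
def Bmap2 (g : ℕ) (i : Fin g) : Function.End (ModTwoSpace g) :=
  fun v => Function.update v i ((v i).1 + (v i).2, (v i).2)

/-- `C_i`: the affine map sending `β_i ↦ β_i − α_i + α_{i+1} + 1` and
`β_{i+1} ↦ β_{i+1} + α_i − α_{i+1} − 1` (here `k` plays the role of `i+1`;
signs are irrelevant mod 2), fixing all other coordinates. -/
def Cmap2 (g : ℕ) (i k : Fin g) : Function.End (ModTwoSpace g) :=
  fun v =>
    Function.update
      (Function.update v i ((v i).1, (v i).2 + (v i).1 + (v k).1 + 1)) k
      ((v k).1, (v k).2 + (v i).1 + (v k).1 + 1)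

/-- The set of generators of the affine action. -/
def affineGens2 (g : ℕ) : Set (Function.End (ModTwoSpace g)) :=
  {F | (∃ i, F = Amap2 g i) ∨ (∃ i, F = Bmap2 g i) ∨
    ∃ i k : Fin g, (i : ℕ) + 1 = (k : ℕ) ∧ F = Cmap2 g i k}

/-- The vanishing number mod 2: the parity of the number of blocks equal to
`(0,0)`. -/
def vanishingNumber (g : ℕ) (v : ModTwoSpace g) : ZMod 2 :=
  ((Finset.univ.filter fun i => v i = 0).card : ZMod 2)

/-- indicator of a block being `(0,0)`. -/
def indZ (p : ZMod 2 × ZMod 2) : ZMod 2 := if p = 0 then 1 else 0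

lemma vn_eq (g : ℕ) (v : ModTwoSpace g) :
    vanishingNumber g v = ∑ j, indZ (v j) := by
  rw [vanishingNumber, Finset.card_filter, Nat.cast_sum]
  apply Finset.sum_congr rfl
  intro j _
  by_cases h : v j = 0 <;> simp [indZ, h]

lemma sum_update (g : ℕ) (v : ModTwoSpace g) (i : Fin g) (x : ZMod 2 × ZMod 2) :
    ∑ j, indZ (Function.update v i x j) = (∑ j, indZ (v j)) + indZ (v i) + indZ x := by
  have h1 : (fun j => indZ (Function.update v i x j)) = Function.update (fun j => indZ (v j)) i (indZ x) := by
    funext j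
    by_cases h : j = i
    · subst h; simp
    · simp [Function.update_of_ne h]
  rw [h1, Finset.sum_update_of_mem (Finset.mem_univ i)]
  have h2 : (∑ j, indZ (v j)) = indZ (v i) + ∑ j ∈ Finset.univ \ {i}, indZ (v j) := by
    rw [← Finset.sum_update_of_mem (Finset.mem_univ i)]
    apply Finset.sum_congr rfl
    intro j _
    by_cases h : j = i
    · subst h; simp
    · simp [Function.update_of_ne h]
  rw [h2]
  ring_nf
  rw [show (2:ZMod 2) = 0 from rfl, mul_zero, add_zero]

lemma indA : ∀ a b : ZMod 2, indZ (a, a + b) = indZ (a, b) := by decide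

lemma indB : ∀ a b : ZMod 2, indZ (a + b, b) = indZ (a, b) := by decide

lemma indC : ∀ a b c d : ZMod 2,
    indZ (c, d) + indZ (a, b) + indZ (a, b + a + c + 1) + indZ (c, d + a + c + 1) = 0 := by
  decide

/-- The vanishing number modulo 2 is invariant under the affine action on
`(ℤ/2ℤ)^{2g}` generated by the `A_i`, `B_i` and `C_i`. -/
theorem vanishing_number_invariant (g : ℕ) :
    ∀ F ∈ Submonoid.closure (affineGens2 g),
      ∀ v : ModTwoSpace g, vanishingNumber g (F v) = vanishingNumber g v := by
  intro F hF
  induction hF using Submonoid.closure_induction with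
  | one => intro v; rfl
  | mul f f' _ _ hf hf' =>
      intro v
      have : (f * f') v = f (f' v) := rfl
      rw [this, hf, hf']
  | mem F hFmem =>
      intro v
      rcases hFmem with ⟨i, rfl⟩ | ⟨i, rfl⟩ | ⟨i, k, hik, rfl⟩
      · rw [vn_eq, vn_eq, Amap2, sum_update]
        have := indA (v i).1 (v i).2
        rw [this]
        rw [show indZ ((v i).1, (v i).2) = indZ (v i) from by rfl]
        rw [add_assoc, CharTwo.add_self_eq_zero, add_zero]
      · rw [vn_eq, vn_eq, Bmap2, sum_update]
        have := indB (v i).1 (v i).2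
        rw [this]
        rw [show indZ ((v i).1, (v i).2) = indZ (v i) from by rfl]
        rw [add_assoc, CharTwo.add_self_eq_zero, add_zero]
      · have hne : i ≠ k := by
          intro h; subst h; omega
        rw [vn_eq, vn_eq, Cmap2, sum_update, sum_update]
        rw [Function.update_of_ne hne.symm]
        have key := indC (v i).1 (v i).2 (v k).1 (v k).2
        have hvi : indZ ((v i).1, (v i).2) = indZ (v i) := by rfl
        have hvk : indZ ((v k).1, (v k).2) = indZ (v k) := by rfl
        rw [← hvi, ← hvk] at key ⊢
        linear_combination key
end

section
/- Consider the affine action on (Z/nZ)^{2g} generated by the transformations A_i, B_i (1 ≤ i ≤ g) and C_i (1 ≤ i ≤ g−1) given by: A_i : β_i ↦ β_i − α_i (other coordinates fixed); B_i : α_i ↦ α_i + β_i (other coordinates fixed); C_i : β_i ↦ β_i − α_i + α_{i+1} + 1, β_{i+1} ↦ β_{i+1} + α_i − α_{i+1} − 1 (other coordinates fixed). If n is odd, this action is transitive on (Z/nZ)^{2g}. -/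
/-- The phase space `((ℤ/nℤ)²)^g`. -/
abbrev ModNSpace (n g : ℕ) := Fin g → ZMod n × ZMod n

/-- `A_i : β_i ↦ β_i − α_i`, other coordinates fixed. -/
def AmapN (n g : ℕ) (i : Fin g) : Function.End (ModNSpace n g) :=
  fun v => Function.update v i ((v i).1, (v i).2 - (v i).1)

/-- `B_i : α_i ↦ α_i + β_i`, other coordinates fixed. -/
def BmapN (n g : ℕ) (i : Fin g) : Function.End (ModNSpace n g) :=
  fun v => Function.update v i ((v i).1 + (v i).2, (v i).2)

/-- `C_i : β_i ↦ β_i − α_i + α_{i+1} + 1`, `β_{i+1} ↦ β_{i+1} + α_i − α_{i+1} − 1`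
(here `k` plays the role of `i+1`), other coordinates fixed. -/
def CmapN (n g : ℕ) (i k : Fin g) : Function.End (ModNSpace n g) :=
  fun v =>
    Function.update
      (Function.update v i ((v i).1, (v i).2 - (v i).1 + (v k).1 + 1)) k
      ((v k).1, (v k).2 + (v i).1 - (v k).1 - 1)

/-- The generators of the affine action. -/
def affineGensN (n g : ℕ) : Set (Function.End (ModNSpace n g)) :=
  {F | (∃ i, F = AmapN n g i) ∨ (∃ i, F = BmapN n g i) ∨
    ∃ i k : Fin g, (i : ℕ) + 1 = (k : ℕ) ∧ F = CmapN n g i k}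

section inv
variable {X : Type*} [Finite X]

def permEnd (e : Equiv.Perm X) : Function.End X := ⇑e

lemma coe_pow_end (e : Equiv.Perm X) (m : ℕ) :
    (permEnd e) ^ m = permEnd (e ^ m) := by
  induction m with
  | zero => rfl
  | succ m ih => rw [pow_succ, pow_succ, ih]; rfl

lemma inv_mem_closure (S : Set (Function.End X)) (e : Equiv.Perm X)
    (he : permEnd e ∈ Submonoid.closure S) :
    permEnd e.symm ∈ Submonoid.closure S := by
  have hpos : 0 < orderOf e := orderOf_pos e
  have h2 : e.symm = e ^ (orderOf e - 1) := by
    have h3 : e * e ^ (orderOf e - 1) = 1 := by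
      rw [← pow_succ', Nat.sub_add_cancel hpos]; exact pow_orderOf_eq_one e
    have := eq_inv_of_mul_eq_one_right h3
    rw [this]; rfl
  rw [h2, ← coe_pow_end]
  exact pow_mem he _
end inv

section work
variable (n g : ℕ)

lemma Amem (i : Fin g) : AmapN n g i ∈ Submonoid.closure (affineGensN n g) :=
  Submonoid.subset_closure (Or.inl ⟨i, rfl⟩)

lemma Bmem (i : Fin g) : BmapN n g i ∈ Submonoid.closure (affineGensN n g) :=
  Submonoid.subset_closure (Or.inr (Or.inl ⟨i, rfl⟩))

lemma Cmem (i k : Fin g) (h : (i : ℕ) + 1 = (k : ℕ)) :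
    CmapN n g i k ∈ Submonoid.closure (affineGensN n g) :=
  Submonoid.subset_closure (Or.inr (Or.inr ⟨i, k, h, rfl⟩))

def negAt (j : Fin g) : Function.End (ModNSpace n g) :=
  fun v => Function.update v j (-(v j))

lemma negAt_word (j : Fin g) :
    negAt n g j =
      BmapN n g j * AmapN n g j * BmapN n g j * BmapN n g j * AmapN n g j * BmapN n g j := by
  funext v
  show negAt n g j v =
    BmapN n g j (AmapN n g j (BmapN n g j (BmapN n g j (AmapN n g j (BmapN n g j v)))))
  funext j'
  by_cases hj : j' = j
  · subst hj; simp [negAt, AmapN, BmapN, Prod.ext_iff]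
  · simp [negAt, AmapN, BmapN, Function.update_apply, hj]

lemma negAt_mem (j : Fin g) : negAt n g j ∈ Submonoid.closure (affineGensN n g) := by
  rw [negAt_word]
  exact mul_mem (mul_mem (mul_mem (mul_mem (mul_mem (Bmem n g j) (Amem n g j))
    (Bmem n g j)) (Bmem n g j)) (Amem n g j)) (Bmem n g j)

def Tmap (u : ModNSpace n g) : Function.End (ModNSpace n g) := fun x => x + u

variable [NeZero n]

def Tequiv (u : ModNSpace n g) : Equiv.Perm (ModNSpace n g) where
  toFun := fun x => x + u
  invFun := fun x => x + (-u)
  left_inv := fun x => by simp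
  right_inv := fun x => by simp

def transSet : AddSubgroup (ModNSpace n g) where
  carrier := {u | Tmap n g u ∈ Submonoid.closure (affineGensN n g)}
  zero_mem' := by
    have h : Tmap n g 0 = 1 := funext fun x => add_zero x
    show Tmap n g 0 ∈ Submonoid.closure (affineGensN n g)
    rw [h]; exact one_mem _
  add_mem' := by
    intro a b ha hb
    have h : Tmap n g (a + b) = Tmap n g a * Tmap n g b := by
      funext x
      show x + (a + b) = (x + b) + a
      abel
    show Tmap n g (a + b) ∈ Submonoid.closure (affineGensN n g)
    rw [h]; exact mul_mem ha hb
  neg_mem' := by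
    intro a ha
    have h := inv_mem_closure (affineGensN n g) (Tequiv n g a) ha
    exact h

lemma mem_transSet_iff (u : ModNSpace n g) :
    u ∈ transSet n g ↔ Tmap n g u ∈ Submonoid.closure (affineGensN n g) := Iff.rfl

lemma smul_mem_transSet (z : ZMod n) {u : ModNSpace n g} (hu : u ∈ transSet n g) :
    z • u ∈ transSet n g := by
  have h := AddSubgroup.nsmul_mem (transSet n g) hu z.val
  rwa [← Nat.cast_smul_eq_nsmul (ZMod n), ZMod.natCast_val, ZMod.cast_id] at h
end work

section work2
variable (n g : ℕ)

def Bequiv (j : Fin g) : Equiv.Perm (ModNSpace n g) where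
  toFun := BmapN n g j
  invFun := fun v => Function.update v j ((v j).1 - (v j).2, (v j).2)
  left_inv := by
    intro v; funext j'
    by_cases hj : j' = j
    · subst hj; simp [BmapN]
    · simp [BmapN, Function.update_apply, hj]
  right_inv := by
    intro v; funext j'
    by_cases hj : j' = j
    · subst hj; simp [BmapN]
    · simp [BmapN, Function.update_apply, hj]

def Cequiv (i k : Fin g) (hik : i ≠ k) : Equiv.Perm (ModNSpace n g) where
  toFun := CmapN n g i k
  invFun := fun v =>
    Function.update
      (Function.update v i ((v i).1, (v i).2 + (v i).1 - (v k).1 - 1)) k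
      ((v k).1, (v k).2 - (v i).1 + (v k).1 + 1)
  left_inv := by
    intro v; funext j'
    by_cases h1 : j' = i
    · subst h1
      simp [CmapN, Function.update_apply, hik, Ne.symm hik, Prod.ext_iff]
      ring
    · by_cases h2 : j' = k
      · subst h2
        simp [CmapN, Function.update_apply, hik, Ne.symm hik, Prod.ext_iff]
        ring
      · simp [CmapN, Function.update_apply, h1, h2]
  right_inv := by
    intro v; funext j'
    by_cases h1 : j' = i
    · subst h1
      simp [CmapN, Function.update_apply, hik, Ne.symm hik, Prod.ext_iff]
      ring
    · by_cases h2 : j' = k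
      · subst h2
        simp [CmapN, Function.update_apply, hik, Ne.symm hik, Prod.ext_iff]
        ring
      · simp [CmapN, Function.update_apply, h1, h2]

lemma Bequiv_symm_apply (j : Fin g) (v : ModNSpace n g) :
    (Bequiv n g j).symm v = Function.update v j ((v j).1 - (v j).2, (v j).2) := rfl

lemma Cequiv_symm_apply (i k : Fin g) (hik : i ≠ k) (v : ModNSpace n g) :
    (Cequiv n g i k hik).symm v = Function.update
        (Function.update v i ((v i).1, (v i).2 + (v i).1 - (v k).1 - 1)) k
        ((v k).1, (v k).2 - (v i).1 + (v k).1 + 1) := rfl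

variable [NeZero n]

lemma tau_mem (i k : Fin g) (hik : (i : ℕ) + 1 = (k : ℕ)) :
    Pi.single i ((0 : ZMod n), (-2 : ZMod n)) + Pi.single k (0, 2) ∈ transSet n g := by
  have hne : i ≠ k := by
    intro h; rw [h] at hik; omega
  rw [mem_transSet_iff]
  have hw : Tmap n g (Pi.single i ((0 : ZMod n), (-2 : ZMod n)) + Pi.single k (0, 2)) =
      negAt n g i * negAt n g k * CmapN n g i k * negAt n g i * negAt n g k *
        permEnd (Cequiv n g i k hne).symm := by
    funext v
    show _ = negAt n g i (negAt n g k (CmapN n g i k (negAt n g i (negAt n g k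
      ((Cequiv n g i k hne).symm v)))))
    funext j'
    by_cases h1 : j' = i
    · subst h1
      simp [Tmap, negAt, CmapN, Cequiv_symm_apply, Function.update_apply, hne, Ne.symm hne,
        Pi.single_apply, Prod.ext_iff]
      ring
    · by_cases h2 : j' = k
      · subst h2
        simp [Tmap, negAt, CmapN, Cequiv_symm_apply, Function.update_apply, hne, Ne.symm hne,
          Pi.single_apply, Prod.ext_iff]
        ring
      · simp [Tmap, negAt, CmapN, Cequiv_symm_apply, Function.update_apply, h1, h2,
          Pi.single_apply]
  rw [hw]
  have hCinv : permEnd (Cequiv n g i k hne).symm ∈ Submonoid.closure (affineGensN n g) :=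
    inv_mem_closure _ _ (Cmem n g i k hik)
  exact mul_mem (mul_mem (mul_mem (mul_mem (mul_mem (negAt_mem n g i) (negAt_mem n g k))
    (Cmem n g i k hik)) (negAt_mem n g i)) (negAt_mem n g k)) hCinv
end work2

section work3
variable (n g : ℕ) [NeZero n]

lemma conj_neg_mem (j : Fin g) {u : ModNSpace n g} (hu : u ∈ transSet n g) :
    Function.update u j (-(u j)) ∈ transSet n g := by
  rw [mem_transSet_iff]
  have hw : Tmap n g (Function.update u j (-(u j))) =
      negAt n g j * Tmap n g u * negAt n g j := by
    funext v
    show _ = negAt n g j (Tmap n g u (negAt n g j v))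
    funext j'
    by_cases hj : j' = j
    · subst hj; simp [Tmap, negAt, Function.update_apply]; ring
    · simp [Tmap, negAt, Function.update_apply, hj]
  rw [hw]
  exact mul_mem (mul_mem (negAt_mem n g j) hu) (negAt_mem n g j)

lemma conj_B_mem (j : Fin g) {u : ModNSpace n g} (hu : u ∈ transSet n g) :
    Function.update u j ((u j).1 + (u j).2, (u j).2) ∈ transSet n g := by
  rw [mem_transSet_iff]
  have hw : Tmap n g (Function.update u j ((u j).1 + (u j).2, (u j).2)) =
      BmapN n g j * Tmap n g u * permEnd (Bequiv n g j).symm := by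
    funext v
    show _ = BmapN n g j (Tmap n g u ((Bequiv n g j).symm v))
    funext j'
    by_cases hj : j' = j
    · subst hj
      simp [Tmap, BmapN, Bequiv_symm_apply, Function.update_apply, Prod.ext_iff]
      ring
    · simp [Tmap, BmapN, Bequiv_symm_apply, Function.update_apply, hj]
  rw [hw]
  have hB : permEnd (Bequiv n g j).symm ∈ Submonoid.closure (affineGensN n g) :=
    inv_mem_closure _ _ (Bmem n g j)
  exact mul_mem (mul_mem (Bmem n g j) hu) hB


lemma single_mem_of_pair (hodd : Odd n) (i k : Fin g) (hik : (i : ℕ) + 1 = (k : ℕ)) :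
    (∀ p : ZMod n × ZMod n, (Pi.single i p : ModNSpace n g) ∈ transSet n g) ∧
      (∀ p : ZMod n × ZMod n, (Pi.single k p : ModNSpace n g) ∈ transSet n g) := by
  have hne : i ≠ k := by intro h; rw [h] at hik; omega
  obtain ⟨m, hm⟩ := hodd
  have h2 : ∀ s : ZMod n, ∃ c : ZMod n, (-2) * c = s := by
    intro s
    refine ⟨-((m + 1 : ℕ) * s), ?_⟩
    have h1 : ((2 * (m + 1) : ℕ) : ZMod n) = 1 := by
      rw [show 2 * (m + 1) = n + 1 by omega]
      push_cast [ZMod.natCast_self]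
      ring
    push_cast at h1 ⊢
    calc (-2) * (-(((m : ZMod n) + 1) * s)) = (2 * ((m : ZMod n) + 1)) * s := by ring
    _ = s := by rw [h1, one_mul]
  have hE : ∀ s : ZMod n,
      (Pi.single i ((0 : ZMod n), s) + Pi.single k ((0 : ZMod n), -s) : ModNSpace n g) ∈
        transSet n g := by
    intro s
    obtain ⟨c, hc⟩ := h2 s
    have h0 := smul_mem_transSet n g c (tau_mem n g i k hik)
    have heq : c • (Pi.single i ((0 : ZMod n), (-2 : ZMod n)) + Pi.single k (0, 2) :
          ModNSpace n g) =
        Pi.single i ((0 : ZMod n), s) + Pi.single k ((0 : ZMod n), -s) := by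
      funext j'
      by_cases ha : j' = i
      · subst ha
        simp [Pi.single_apply, hne, Prod.ext_iff, smul_eq_mul]
        linear_combination hc
      · by_cases hb : j' = k
        · subst hb
          simp [Pi.single_apply, Ne.symm hne, Prod.ext_iff, smul_eq_mul]
          linear_combination -hc
        · simp [Pi.single_apply, ha, hb]
    rwa [heq] at h0
  have hF : ∀ s : ZMod n,
      (Pi.single i ((0 : ZMod n), s) + Pi.single k ((0 : ZMod n), s) : ModNSpace n g) ∈
        transSet n g := by
    intro s
    have h0 := conj_neg_mem n g k (hE s)
    set E : ModNSpace n g := Pi.single i ((0 : ZMod n), s) + Pi.single k ((0 : ZMod n), -s) with hEdef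
    have heq : Function.update E k (-(E k)) =
        (Pi.single i ((0 : ZMod n), s) + Pi.single k ((0 : ZMod n), s) : ModNSpace n g) := by
      rw [hEdef]
      funext j'
      by_cases ha : j' = i
      · subst ha; simp [Function.update_apply, Pi.single_apply, hne, Ne.symm hne]
      · by_cases hb : j' = k
        · subst hb; simp [Function.update_apply, Pi.single_apply, Ne.symm hne]
        · simp [Function.update_apply, Pi.single_apply, ha, hb]
    rwa [heq] at h0
  have hbeta : ∀ (j : Fin g), j = i ∨ j = k → ∀ s : ZMod n,
      (Pi.single j ((0 : ZMod n), s) : ModNSpace n g) ∈ transSet n g := by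
    rintro j (rfl | rfl) s
    · obtain ⟨c, hc⟩ := h2 (-s)
      have hs : c + c = s := by linear_combination -hc
      have h0 := AddSubgroup.add_mem _ (hE c) (hF c)
      have heq : ((Pi.single j ((0 : ZMod n), c) + Pi.single k ((0 : ZMod n), -c)) +
          (Pi.single j ((0 : ZMod n), c) + Pi.single k ((0 : ZMod n), c)) : ModNSpace n g) =
          Pi.single j ((0 : ZMod n), s) := by
        funext j'
        by_cases ha : j' = j
        · subst ha; simp [Pi.single_apply, hne, Prod.ext_iff, hs]
        · by_cases hb : j' = k
          · subst hb; simp [Pi.single_apply, Ne.symm hne]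
          · simp [Pi.single_apply, ha, hb]
      rwa [heq] at h0
    · obtain ⟨c, hc⟩ := h2 (-s)
      have hs : c + c = s := by linear_combination -hc
      have h0 := AddSubgroup.sub_mem _ (hF c) (hE c)
      have heq : ((Pi.single i ((0 : ZMod n), c) + Pi.single j ((0 : ZMod n), c)) -
          (Pi.single i ((0 : ZMod n), c) + Pi.single j ((0 : ZMod n), -c)) : ModNSpace n g) =
          Pi.single j ((0 : ZMod n), s) := by
        funext j'
        by_cases ha : j' = i
        · subst ha; simp [Pi.single_apply, hne, Prod.ext_iff]
        · by_cases hb : j' = j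
          · subst hb
            simp [Pi.single_apply, Ne.symm hne, Prod.ext_iff]
            linear_combination hs
          · simp [Pi.single_apply, ha, hb]
      rwa [heq] at h0
  have main : ∀ j : Fin g,
      (∀ s : ZMod n, (Pi.single j ((0 : ZMod n), s) : ModNSpace n g) ∈ transSet n g) →
      ∀ p : ZMod n × ZMod n, (Pi.single j p : ModNSpace n g) ∈ transSet n g := by
    intro j hj p
    obtain ⟨a, b⟩ := p
    have h0 := conj_B_mem n g j (hj a)
    have heq : Function.update (Pi.single j ((0 : ZMod n), a) : ModNSpace n g) j
        (((Pi.single j ((0 : ZMod n), a) : ModNSpace n g) j).1 +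
          ((Pi.single j ((0 : ZMod n), a) : ModNSpace n g) j).2,
          ((Pi.single j ((0 : ZMod n), a) : ModNSpace n g) j).2) =
        (Pi.single j ((a : ZMod n), a) : ModNSpace n g) := by
      funext j'
      by_cases ha : j' = j
      · subst ha; simp [Function.update_apply, Pi.single_apply]
      · simp [Function.update_apply, Pi.single_apply, ha]
    rw [heq] at h0
    -- single j (a,a) ∈, single j (0,a) ∈, single j (0,b) ∈
    have h1 := AddSubgroup.add_mem _ (AddSubgroup.sub_mem _ h0 (hj a)) (hj b)
    have heq2 : (Pi.single j ((a : ZMod n), a) - Pi.single j ((0 : ZMod n), a) +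
        Pi.single j ((0 : ZMod n), b) : ModNSpace n g) = Pi.single j (a, b) := by
      funext j'
      by_cases ha : j' = j
      · subst ha; simp [Pi.single_apply, Prod.ext_iff]
      · simp [Pi.single_apply, ha]
    rwa [heq2] at h1
  exact ⟨main i (hbeta i (Or.inl rfl)), main k (hbeta k (Or.inr rfl))⟩

lemma single_mem_all (hodd : Odd n) (hg : 2 ≤ g) (j : Fin g) (p : ZMod n × ZMod n) :
    (Pi.single j p : ModNSpace n g) ∈ transSet n g := by
  by_cases h : (j : ℕ) + 1 < g
  · have hik : (j : ℕ) + 1 = ((⟨(j : ℕ) + 1, h⟩ : Fin g) : ℕ) := rfl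
    exact (single_mem_of_pair n g hodd j ⟨(j : ℕ) + 1, h⟩ hik).1 p
  · have hj : (j : ℕ) = g - 1 := by have := j.isLt; omega
    have hlt : g - 2 < g := by omega
    have hik : ((⟨g - 2, hlt⟩ : Fin g) : ℕ) + 1 = (j : ℕ) := by simp [hj]; omega
    exact (single_mem_of_pair n g hodd ⟨g - 2, hlt⟩ j hik).2 p

lemma trans_mem_all (hodd : Odd n) (hg : 2 ≤ g) (u : ModNSpace n g) :
    Tmap n g u ∈ Submonoid.closure (affineGensN n g) := by
  have h : u ∈ transSet n g := by
    have hu : u = ∑ j : Fin g, Pi.single j (u j) := by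
      rw [Finset.univ_sum_single]
    rw [hu]
    exact AddSubgroup.sum_mem _ fun j _ => single_mem_all n g hodd hg j (u j)
  exact h
end work3

/-- If `n` is odd, the affine action on `(ℤ/nℤ)^{2g}` generated by the `A_i`,
`B_i` and `C_i` is transitive. -/
theorem affine_action_transitive_of_odd (n g : ℕ) (hn : 0 < n) (hodd : Odd n)
    (hg : 2 ≤ g) :
    ∀ v w : ModNSpace n g,
      ∃ F ∈ Submonoid.closure (affineGensN n g), F v = w := by
  haveI : NeZero n := ⟨hn.ne'⟩
  intro v w
  refine ⟨Tmap n g (w - v), trans_mem_all n g hodd hg (w - v), ?_⟩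
  show v + (w - v) = w
  abel
end

section
/- Consider the affine action on (Z/nZ)^{2g} generated by A_i, B_i, C_i as above, where A_i : β_i ↦ β_i − α_i; B_i : α_i ↦ α_i + β_i; C_i : β_i ↦ β_i − α_i + α_{i+1} + 1 and β_{i+1} ↦ β_{i+1} + α_i − α_{i+1} − 1. If n is even, this action has exactly two orbits on (Z/nZ)^{2g}, distinguished by the parity invariant obtained by reducing mod 2 and counting mod 2 the number of indices i with (α_i, β_i) ≡ (0,0) mod 2. -/
/-- The mod-2 vanishing-number parity of an element of `((ℤ/nℤ)²)^g` (for
`2 ∣ n`): the parity of the number of blocks congruent to `(0,0)` mod 2. -/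
def vanishParityN (n g : ℕ) (hn2 : (2 : ℕ) ∣ n) (v : ModNSpace n g) : ZMod 2 :=
  ((Finset.univ.filter fun i =>
    ZMod.castHom hn2 (ZMod 2) (v i).1 = 0 ∧
    ZMod.castHom hn2 (ZMod 2) (v i).2 = 0).card : ZMod 2)

section lemmas
variable {n g : ℕ}

def MRel (n g : ℕ) (v w : ModNSpace n g) : Prop :=
  ∃ F ∈ Submonoid.closure (affineGensN n g), F v = w

lemma mrel_refl (v : ModNSpace n g) : MRel n g v v :=
  ⟨1, one_mem _, rfl⟩

lemma rel_trans {u v w : ModNSpace n g} (h1 : MRel n g u v) (h2 : MRel n g v w) :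
    MRel n g u w := by
  obtain ⟨F, hF, rfl⟩ := h1
  obtain ⟨G, hG, rfl⟩ := h2
  exact ⟨G * F, mul_mem hG hF, rfl⟩

lemma A_inj (i : Fin g) : Function.Injective (AmapN n g i) := by
  have : Function.LeftInverse
      (fun v : ModNSpace n g => Function.update v i ((v i).1, (v i).2 + (v i).1))
      (AmapN n g i) := by
    intro v
    simp [AmapN, Function.update_idem]
  exact this.injective

lemma B_inj (i : Fin g) : Function.Injective (BmapN n g i) := by
  have : Function.LeftInverse
      (fun v : ModNSpace n g => Function.update v i ((v i).1 - (v i).2, (v i).2))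
      (BmapN n g i) := by
    intro v
    simp [BmapN, Function.update_idem]
  exact this.injective

lemma C_inj {i k : Fin g} (hik : i ≠ k) : Function.Injective (CmapN n g i k) := by
  have : Function.LeftInverse
      (fun v : ModNSpace n g =>
        Function.update
          (Function.update v i ((v i).1, (v i).2 + (v i).1 - (v k).1 - 1)) k
          ((v k).1, (v k).2 - (v i).1 + (v k).1 + 1))
      (CmapN n g i k) := by
    intro v
    funext j
    rcases eq_or_ne j k with rfl | hjk
    · simp [CmapN, Function.update_of_ne hik, Function.update_of_ne hik.symm]
      ring_nf
    · rcases eq_or_ne j i with rfl | hji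
      · simp [CmapN, Function.update_of_ne hik, Function.update_of_ne hjk]
        ring_nf
      · simp [CmapN, Function.update_of_ne hjk, Function.update_of_ne hji]
  exact this.injective

lemma gens_inj {F : Function.End (ModNSpace n g)} (hF : F ∈ affineGensN n g) :
    Function.Injective F := by
  rcases hF with ⟨i, rfl⟩ | ⟨i, rfl⟩ | ⟨i, k, hik, rfl⟩
  · exact A_inj i
  · exact B_inj i
  · exact C_inj (by intro h; rw [h] at hik; omega)

lemma closure_inj {F : Function.End (ModNSpace n g)}
    (hF : F ∈ Submonoid.closure (affineGensN n g)) : Function.Injective F := by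
  induction hF using Submonoid.closure_induction with
  | mem x hx => exact gens_inj hx
  | one => exact fun a b h => h
  | mul x y hx hy ihx ihy => exact ihx.comp ihy

lemma rel_symm (hn : 0 < n) {v w : ModNSpace n g} (h : MRel n g v w) : MRel n g w v := by
  haveI : NeZero n := ⟨hn.ne'⟩
  obtain ⟨F, hF, rfl⟩ := h
  have hfin : Finite (Function.End (ModNSpace n g)) := by
    show Finite (ModNSpace n g → ModNSpace n g); infer_instance
  obtain ⟨a, b, hab, hpow⟩ := Finite.exists_ne_map_eq_of_infinite
    (fun m : ℕ => F ^ m)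
  wlog hlt : a < b generalizing a b
  · exact this b a hab.symm hpow.symm (by omega)
  have hinjp : ∀ m : ℕ, Function.Injective (F ^ m) := by
    intro m
    induction m with
    | zero => exact fun x y h => h
    | succ m ih =>
      rw [pow_succ]
      exact ih.comp (closure_inj hF)
  have hinj := hinjp a
  have hid : F ^ (b - a) = 1 := by
    funext x
    have h1 : (F ^ a) ((F ^ (b - a)) x) = (F ^ a) x := by
      have : F ^ a * F ^ (b - a) = F ^ b := by
        rw [← pow_add]; congr 1; omega
      have h2 : (F ^ a * F ^ (b - a)) x = (F ^ b) x := by rw [this]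
      exact h2.trans (congrFun hpow.symm x)
    exact hinj h1
  obtain ⟨c, hc⟩ : ∃ c, b - a = c + 1 := ⟨b - a - 1, by omega⟩
  refine ⟨F ^ c, pow_mem hF c, ?_⟩
  rw [hc] at hid
  calc (F ^ c) (F v) = (F ^ (c + 1)) v := by rw [pow_succ]; rfl
    _ = v := by rw [hid]; rfl

lemma rel_gen {F : Function.End (ModNSpace n g)} (hF : F ∈ affineGensN n g)
    (v : ModNSpace n g) : MRel n g v (F v) :=
  ⟨F, Submonoid.subset_closure hF, rfl⟩

lemma pair_ext {a b c d : ZMod n} (h1 : a = c) (h2 : b = d) :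
    ((a, b) : ZMod n × ZMod n) = (c, d) := by rw [h1, h2]

lemma relA (i : Fin g) (v : ModNSpace n g) :
    MRel n g v (Function.update v i ((v i).1, (v i).2 - (v i).1)) :=
  rel_gen (Or.inl ⟨i, rfl⟩) v

lemma relB (i : Fin g) (v : ModNSpace n g) :
    MRel n g v (Function.update v i ((v i).1 + (v i).2, (v i).2)) :=
  rel_gen (Or.inr (Or.inl ⟨i, rfl⟩)) v

lemma relC {i k : Fin g} (hik : (i : ℕ) + 1 = (k : ℕ)) (v : ModNSpace n g) :
    MRel n g v (CmapN n g i k v) :=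
  rel_gen (Or.inr (Or.inr ⟨i, k, hik, rfl⟩)) v

lemma relsubβ (i : Fin g) (v : ModNSpace n g) (q : ℕ) :
    MRel n g v (Function.update v i ((v i).1, (v i).2 - (q : ZMod n) * (v i).1)) := by
  induction q with
  | zero => simpa using mrel_refl v
  | succ q ih =>
    refine rel_trans ih ?_
    set w := Function.update v i ((v i).1, (v i).2 - (q : ZMod n) * (v i).1) with hw
    have h := relA i w
    have he : Function.update w i ((w i).1, (w i).2 - (w i).1)
        = Function.update v i ((v i).1, (v i).2 - ((q + 1 : ℕ) : ZMod n) * (v i).1) := by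
      simp only [hw, Function.update_self, Function.update_idem]
      rw [show ((v i).1, (v i).2 - (q : ZMod n) * (v i).1 - (v i).1)
          = ((v i).1, (v i).2 - ((q + 1 : ℕ) : ZMod n) * (v i).1) from
        pair_ext rfl (by push_cast; ring)]
    rwa [he] at h

lemma relSwap (i : Fin g) (v : ModNSpace n g) :
    MRel n g v (Function.update v i ((v i).2, -(v i).1)) := by
  have h1 := relA i v
  have h2 := relB i (Function.update v i ((v i).1, (v i).2 - (v i).1))
  simp only [Function.update_self, Function.update_idem] at h2
  rw [show ((v i).1 + ((v i).2 - (v i).1), (v i).2 - (v i).1)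
      = ((v i).2, (v i).2 - (v i).1) from pair_ext (by ring) rfl] at h2
  have h3 := relA i (Function.update v i ((v i).2, (v i).2 - (v i).1))
  simp only [Function.update_self, Function.update_idem] at h3
  rw [show ((v i).2, (v i).2 - (v i).1 - (v i).2)
      = ((v i).2, -(v i).1) from pair_ext rfl (by ring)] at h3
  exact rel_trans h1 (rel_trans h2 h3)

lemma relNeg (i : Fin g) (v : ModNSpace n g) :
    MRel n g v (Function.update v i (-(v i).1, -(v i).2)) := by
  refine rel_trans (relSwap i v) ?_
  have h := relSwap i (Function.update v i ((v i).2, -(v i).1))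
  simp only [Function.update_self, Function.update_idem] at h
  exact h

lemma relCshift {i k : Fin g} (hik : (i : ℕ) + 1 = (k : ℕ)) (v : ModNSpace n g)
    (hi : (v i).1 = 0) (hk : (v k).1 = 0) (t : ℕ) :
    MRel n g v (Function.update (Function.update v i (0, (v i).2 + t)) k
      (0, (v k).2 - t)) := by
  have hne : i ≠ k := by intro h; rw [h] at hik; omega
  induction t with
  | zero =>
    have he : Function.update (Function.update v i (0, (v i).2 + ((0 : ℕ) : ZMod n))) k
        (0, (v k).2 - ((0 : ℕ) : ZMod n)) = v := by
      funext j
      rcases eq_or_ne j k with rfl | hjk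
      · rw [Function.update_self,
          pair_ext hk.symm (show (v j).2 - ((0:ℕ) : ZMod n) = (v j).2 by push_cast; ring)]
      · rcases eq_or_ne j i with rfl | hji
        · rw [Function.update_of_ne hjk, Function.update_self,
            pair_ext hi.symm (show (v j).2 + ((0:ℕ) : ZMod n) = (v j).2 by push_cast; ring)]
        · rw [Function.update_of_ne hjk, Function.update_of_ne hji]
    rw [he]; exact mrel_refl v
  | succ t ih =>
    refine rel_trans ih ?_
    set w := Function.update (Function.update v i (0, (v i).2 + t)) k
      (0, (v k).2 - t) with hw
    have h := relC hik w
    have hwi : w i = (0, (v i).2 + t) := by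
      rw [hw, Function.update_of_ne hne, Function.update_self]
    have hwk : w k = (0, (v k).2 - t) := by
      rw [hw, Function.update_self]
    have he : CmapN n g i k w = Function.update (Function.update v i
        (0, (v i).2 + ((t + 1 : ℕ) : ZMod n))) k (0, (v k).2 - ((t + 1 : ℕ) : ZMod n)) := by
      funext j
      rcases eq_or_ne j k with rfl | hjk
      · simp only [CmapN, Function.update_self, hwi, hwk]
        exact pair_ext rfl (by push_cast; ring)
      · rcases eq_or_ne j i with rfl | hji
        · simp only [CmapN, Function.update_of_ne hjk, Function.update_self, hwi, hwk]
          exact pair_ext rfl (by push_cast; ring)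
        · simp only [CmapN, Function.update_of_ne hjk, Function.update_of_ne hji, hw]
    rw [he] at h
    exact h

lemma euclid_aux (hn : 0 < n) : ∀ m : ℕ, ∀ a : ℕ, a ≤ m →
    ∀ (v : ModNSpace n g) (i : Fin g),
    ((a : ZMod n) = (v i).1) → ∃ c, MRel n g v (Function.update v i (0, c)) := by
  haveI : NeZero n := ⟨hn.ne'⟩
  intro m
  induction m with
  | zero =>
    intro a ha v i hai
    interval_cases a
    refine ⟨(v i).2, ?_⟩
    have he : Function.update v i (0, (v i).2) = v := by
      funext j
      rcases eq_or_ne j i with rfl | hji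
      · rw [Function.update_self]
        rw [show ((0 : ZMod n), (v j).2) = ((v j).1, (v j).2) from
          pair_ext (by rw [← hai]; push_cast; ring) rfl]
      · rw [Function.update_of_ne hji]
    rw [he]; exact mrel_refl v
  | succ m ih =>
    intro a ha v i hai
    rcases Nat.lt_or_ge a (m + 1) with hlt | hge
    · exact ih a (by omega) v i hai
    · have haz : a ≠ 0 := by omega
      obtain ⟨b, hbv⟩ : ∃ b : ℕ, ((b : ℕ) : ZMod n) = (v i).2 :=
        ⟨((v i).2).val, by simp [ZMod.natCast_val, ZMod.cast_id]⟩
      have h1 := relsubβ i v (b / a)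
      have hβ : (v i).2 - ((b / a : ℕ) : ZMod n) * (v i).1 = ((b % a : ℕ) : ZMod n) := by
        rw [← hai, ← hbv]
        have hd : a * (b / a) + b % a = b := Nat.div_add_mod b a
        calc ((b : ℕ) : ZMod n) - ((b / a : ℕ) : ZMod n) * ((a : ℕ) : ZMod n)
            = ((a * (b / a) + b % a : ℕ) : ZMod n)
              - ((b / a : ℕ) : ZMod n) * ((a : ℕ) : ZMod n) := by rw [hd]
          _ = ((b % a : ℕ) : ZMod n) := by push_cast; ring
      rw [hβ] at h1
      have h2 := relSwap i (Function.update v i ((v i).1, ((b % a : ℕ) : ZMod n)))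
      simp only [Function.update_self, Function.update_idem] at h2
      have hrm : b % a ≤ m := by
        have : b % a < a := Nat.mod_lt _ (by omega)
        omega
      obtain ⟨c, h3⟩ := ih (b % a) hrm
        (Function.update v i (((b % a : ℕ) : ZMod n), -(v i).1)) i
        (by rw [Function.update_self])
      rw [Function.update_idem] at h3
      exact ⟨c, rel_trans h1 (rel_trans h2 h3)⟩

lemma euclid (hn : 0 < n) (v : ModNSpace n g) (i : Fin g) :
    ∃ c, MRel n g v (Function.update v i (0, c)) := by
  haveI : NeZero n := ⟨hn.ne'⟩
  exact euclid_aux hn ((v i).1).val ((v i).1).val le_rfl v i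
    (by rw [ZMod.natCast_val, ZMod.cast_id])

def Efun (n g : ℕ) (s : ZMod n) : ModNSpace n g :=
  fun j => (0, if (j : ℕ) = 0 then s else 0)

lemma step1 (hn : 0 < n) (v : ModNSpace n g) :
    ∃ w, MRel n g v w ∧ ∀ j, (w j).1 = 0 := by
  suffices h : ∀ m : ℕ, ∃ w, MRel n g v w ∧ ∀ j : Fin g, (j : ℕ) < m → (w j).1 = 0 by
    obtain ⟨w, h1, h2⟩ := h g
    exact ⟨w, h1, fun j => h2 j j.isLt⟩
  intro m
  induction m with
  | zero => exact ⟨v, mrel_refl v, fun j hj => absurd hj (by omega)⟩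
  | succ m ih =>
    obtain ⟨w, h1, h2⟩ := ih
    by_cases hm : m < g
    · obtain ⟨c, h3⟩ := euclid hn w ⟨m, hm⟩
      refine ⟨_, rel_trans h1 h3, ?_⟩
      intro j hj
      rcases eq_or_ne j ⟨m, hm⟩ with rfl | hne
      · rw [Function.update_self]
      · rw [Function.update_of_ne hne]
        refine h2 j ?_
        have : (j : ℕ) ≠ m := fun h => hne (Fin.ext h)
        omega
    · exact ⟨w, h1, fun j hj => h2 j (by omega)⟩

lemma step2 (hn : 0 < n) (hg : 2 ≤ g) (w : ModNSpace n g) (hw : ∀ j, (w j).1 = 0) :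
    ∃ s : ZMod n, MRel n g w (Efun n g s) := by
  haveI : NeZero n := ⟨hn.ne'⟩
  suffices h : ∀ m : ℕ, m ≤ g - 1 → ∃ w', MRel n g w w' ∧ (∀ j, (w' j).1 = 0) ∧
      (∀ j : Fin g, g - m ≤ (j : ℕ) → (w' j).2 = 0) by
    obtain ⟨w', h1, h2, h3⟩ := h (g - 1) le_rfl
    refine ⟨(w' ⟨0, by omega⟩).2, ?_⟩
    have he : w' = Efun n g ((w' ⟨0, by omega⟩).2) := by
      funext j
      by_cases hj : (j : ℕ) = 0
      · have hje : j = ⟨0, by omega⟩ := Fin.ext hj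
        rw [Efun, if_pos hj, ← hje]
        exact (pair_ext (h2 j).symm rfl).symm
      · rw [Efun, if_neg hj]
        refine (pair_ext (h2 j).symm ?_).symm
        exact (h3 j (by omega)).symm
    rw [← he]; exact h1
  intro m
  induction m with
  | zero =>
    intro _
    exact ⟨w, mrel_refl w, hw, fun j hj => absurd hj (by have := j.isLt; omega)⟩
  | succ m ih =>
    intro hm1
    obtain ⟨w', h1, h2, h3⟩ := ih (by omega)
    have hd1 : 1 ≤ g - (m + 1) := by omega
    have hdg : g - (m + 1) < g := by omega
    have hd1g : g - (m + 1) - 1 < g := by omega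
    set i : Fin g := ⟨g - (m + 1) - 1, hd1g⟩ with hidef
    set k : Fin g := ⟨g - (m + 1), hdg⟩ with hkdef
    have hik : (i : ℕ) + 1 = (k : ℕ) := by simp [hidef, hkdef]; omega
    have h4 := relCshift hik w' (h2 i) (h2 k) (((w' k).2).val)
    have hne : i ≠ k := by intro h; rw [h] at hik; omega
    refine ⟨_, rel_trans h1 h4, ?_, ?_⟩
    · intro j
      rcases eq_or_ne j k with rfl | hjk
      · rw [Function.update_self]
      · rcases eq_or_ne j i with rfl | hji
        · rw [Function.update_of_ne hjk, Function.update_self]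
        · rw [Function.update_of_ne hjk, Function.update_of_ne hji]; exact h2 j
    · intro j hj
      rcases eq_or_ne j k with rfl | hjk
      · rw [Function.update_self]
        show (w' k).2 - ((((w' k).2).val : ℕ) : ZMod n) = 0
        rw [ZMod.natCast_val, ZMod.cast_id, sub_self]
      · have hjd : (j : ℕ) ≠ g - (m + 1) := fun h => hjk (Fin.ext h)
        have hji : j ≠ i := by
          intro h
          rw [h] at hj
          simp only [hidef] at hj
          omega
        rw [Function.update_of_ne hjk, Function.update_of_ne hji]
        exact h3 j (by omega)

lemma relE2 (hn : 0 < n) (hg : 2 ≤ g) (s : ZMod n) :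
    MRel n g (Efun n g s) (Efun n g (s + 2)) := by
  have h0g : 0 < g := by omega
  have h1g : 1 < g := by omega
  set i : Fin g := ⟨0, h0g⟩ with hidef
  set k : Fin g := ⟨1, h1g⟩ with hkdef
  have hik : (i : ℕ) + 1 = (k : ℕ) := rfl
  have hne : i ≠ k := by intro h; rw [h] at hik; omega
  have hEi : Efun n g s i = (0, s) := by rw [Efun]; simp [hidef]
  have hEk : Efun n g s k = (0, 0) := by rw [Efun]; simp [hkdef]
  have h1 := relCshift hik (Efun n g s) (by rw [hEi]) (by rw [hEk]) 1
  set u1 := Function.update (Function.update (Efun n g s) i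
      (0, (Efun n g s i).2 + ((1:ℕ) : ZMod n))) k
      (0, (Efun n g s k).2 - ((1:ℕ) : ZMod n)) with hu1
  have hu1k : u1 k = (0, (0 : ZMod n) - 1) := by
    rw [hu1, Function.update_self, hEk]; push_cast; rfl
  have hu1i : u1 i = (0, s + 1) := by
    rw [hu1, Function.update_of_ne hne, Function.update_self, hEi]; push_cast; rfl
  have h2 := relNeg k u1
  rw [hu1k] at h2
  rw [show (-(0 : ZMod n), -((0:ZMod n) - 1)) = ((0 : ZMod n), (1 : ZMod n)) from
    pair_ext (by ring) (by ring)] at h2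
  set u2 := Function.update u1 k ((0 : ZMod n), (1 : ZMod n)) with hu2
  have hu2i : u2 i = (0, s + 1) := by
    rw [hu2, Function.update_of_ne hne, hu1i]
  have hu2k : u2 k = (0, 1) := by rw [hu2, Function.update_self]
  have h3 := relCshift hik u2 (by rw [hu2i]) (by rw [hu2k]) 1
  have he : Function.update (Function.update u2 i (0, (u2 i).2 + ((1:ℕ) : ZMod n))) k
      (0, (u2 k).2 - ((1:ℕ) : ZMod n)) = Efun n g (s + 2) := by
    funext j
    rcases eq_or_ne j k with rfl | hjk
    · rw [Function.update_self, hu2k, Efun]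
      have : ((k : Fin g) : ℕ) ≠ 0 := by rw [hkdef]; omega
      rw [if_neg this]
      exact pair_ext rfl (by push_cast; ring)
    · rcases eq_or_ne j i with rfl | hji
      · rw [Function.update_of_ne hjk, Function.update_self, hu2i, Efun]
        have : ((i : Fin g) : ℕ) = 0 := rfl
        rw [if_pos this]
        exact pair_ext rfl (by push_cast; ring)
      · rw [Function.update_of_ne hjk, Function.update_of_ne hji, hu2,
          Function.update_of_ne hjk, hu1, Function.update_of_ne hjk,
          Function.update_of_ne hji, Efun, Efun]
        have : ((j : Fin g) : ℕ) ≠ 0 := by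
          intro h
          exact hji (Fin.ext h)
        rw [if_neg this, if_neg this]
  rw [he] at h3
  exact rel_trans h1 (rel_trans h2 h3)

lemma relE2m (hn : 0 < n) (hg : 2 ≤ g) (s : ZMod n) (t : ℕ) :
    MRel n g (Efun n g s) (Efun n g (s + ((2 * t : ℕ) : ZMod n))) := by
  induction t with
  | zero =>
    rw [show s + ((2 * 0 : ℕ) : ZMod n) = s by push_cast; ring]
    exact mrel_refl _
  | succ t ih =>
    refine rel_trans ih ?_
    have h := relE2 hn hg (s + ((2 * t : ℕ) : ZMod n))
    rw [show s + ((2 * t : ℕ) : ZMod n) + 2 = s + ((2 * (t + 1) : ℕ) : ZMod n) by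
      push_cast; ring] at h
    exact h

lemma relE01 (hn : 0 < n) (hn2 : (2 : ℕ) ∣ n) (hg : 2 ≤ g) (s : ZMod n) :
    MRel n g (Efun n g s) (Efun n g 0) ∨ MRel n g (Efun n g s) (Efun n g 1) := by
  haveI : NeZero n := ⟨hn.ne'⟩
  have hvlt : s.val < n := ZMod.val_lt s
  have hvs : ((s.val : ℕ) : ZMod n) = s := by rw [ZMod.natCast_val, ZMod.cast_id]
  rcases Nat.even_or_odd s.val with he | ho
  · left
    have h2t : 2 * ((n - s.val) / 2) = n - s.val := by
      obtain ⟨a, ha⟩ := he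
      obtain ⟨b, hb⟩ := hn2
      omega
    have h := relE2m hn hg s ((n - s.val) / 2)
    rw [h2t] at h
    rw [show ((n - s.val : ℕ) : ZMod n) = -s by
      rw [Nat.cast_sub (by omega), hvs, ZMod.natCast_self]; ring] at h
    rw [show s + -s = 0 by ring] at h
    exact h
  · right
    have h2t : 2 * ((n + 1 - s.val) / 2) = n + 1 - s.val := by
      obtain ⟨a, ha⟩ := ho
      obtain ⟨b, hb⟩ := hn2
      omega
    have h := relE2m hn hg s ((n + 1 - s.val) / 2)
    rw [h2t] at h
    rw [show ((n + 1 - s.val : ℕ) : ZMod n) = 1 - s by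
      rw [Nat.cast_sub (by omega)]; push_cast [ZMod.natCast_self, hvs]; ring] at h
    rw [show s + (1 - s) = 1 by ring] at h
    exact h

lemma canonE (hn : 0 < n) (hn2 : (2 : ℕ) ∣ n) (hg : 2 ≤ g) (v : ModNSpace n g) :
    MRel n g v (Efun n g 0) ∨ MRel n g v (Efun n g 1) := by
  obtain ⟨w, h1, h2⟩ := step1 hn v
  obtain ⟨s, h3⟩ := step2 hn hg w h2
  rcases relE01 hn hn2 hg s with h | h
  · exact Or.inl (rel_trans h1 (rel_trans h3 h))
  · exact Or.inr (rel_trans h1 (rel_trans h3 h))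

lemma parity_sum (hn2 : (2 : ℕ) ∣ n) (v : ModNSpace n g) :
    vanishParityN n g hn2 v = ∑ j : Fin g,
      if (ZMod.castHom hn2 (ZMod 2) (v j).1 = 0 ∧
          ZMod.castHom hn2 (ZMod 2) (v j).2 = 0) then (1 : ZMod 2) else 0 := by
  rw [vanishParityN, Finset.card_filter, Nat.cast_sum]
  refine Finset.sum_congr rfl fun j _ => ?_
  split_ifs <;> simp

lemma parityA (hn2 : (2 : ℕ) ∣ n) (i : Fin g) (v : ModNSpace n g) :
    vanishParityN n g hn2 (AmapN n g i v) = vanishParityN n g hn2 v := by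
  rw [parity_sum, parity_sum]
  refine Finset.sum_congr rfl fun j _ => ?_
  refine if_congr ?_ rfl rfl
  rw [AmapN, Function.update_apply]
  rcases eq_or_ne j i with rfl | hji
  · rw [if_pos rfl]
    constructor <;> rintro ⟨h1, h2⟩ <;> refine ⟨h1, ?_⟩
    · rw [map_sub, h1, sub_zero] at h2; exact h2
    · show ZMod.castHom hn2 (ZMod 2) ((v j).2 - (v j).1) = 0
      rw [map_sub, h1, sub_zero]; exact h2
  · rw [if_neg hji]

lemma parityB (hn2 : (2 : ℕ) ∣ n) (i : Fin g) (v : ModNSpace n g) :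
    vanishParityN n g hn2 (BmapN n g i v) = vanishParityN n g hn2 v := by
  rw [parity_sum, parity_sum]
  refine Finset.sum_congr rfl fun j _ => ?_
  refine if_congr ?_ rfl rfl
  rw [BmapN, Function.update_apply]
  rcases eq_or_ne j i with rfl | hji
  · rw [if_pos rfl]
    constructor <;> rintro ⟨h1, h2⟩
    · have h1' : ZMod.castHom hn2 (ZMod 2) (v j).1 = 0 := by
        have := h1
        rw [map_add] at this
        -- this : cast α + cast β = 0, h2 : cast β = 0
        rw [h2, add_zero] at this
        exact this
      exact ⟨h1', h2⟩
    · refine ⟨?_, h2⟩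
      show ZMod.castHom hn2 (ZMod 2) ((v j).1 + (v j).2) = 0
      rw [map_add, h1, h2, add_zero]
  · rw [if_neg hji]

lemma parityC (hn2 : (2 : ℕ) ∣ n) {i k : Fin g} (hne : i ≠ k) (v : ModNSpace n g) :
    vanishParityN n g hn2 (CmapN n g i k v) = vanishParityN n g hn2 v := by
  classical
  rw [parity_sum, parity_sum]
  set φ := ZMod.castHom hn2 (ZMod 2) with hφ
  set f : Fin g → ZMod 2 := fun j =>
    if (φ (v j).1 = 0 ∧ φ (v j).2 = 0) then 1 else 0 with hf
  set f' : Fin g → ZMod 2 := fun j =>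
    if (φ ((CmapN n g i k v) j).1 = 0 ∧ φ ((CmapN n g i k v) j).2 = 0)
      then 1 else 0 with hf'
  show ∑ j, f' j = ∑ j, f j
  have hki : k ∈ Finset.univ.erase i := Finset.mem_erase.2 ⟨(Ne.symm hne), Finset.mem_univ k⟩
  rw [← Finset.add_sum_erase _ f' (Finset.mem_univ i),
      ← Finset.add_sum_erase _ f (Finset.mem_univ i),
      ← Finset.add_sum_erase _ f' hki, ← Finset.add_sum_erase _ f hki]
  have hrest : ∑ x ∈ (Finset.univ.erase i).erase k, f' x
      = ∑ x ∈ (Finset.univ.erase i).erase k, f x := by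
    refine Finset.sum_congr rfl fun j hj => ?_
    have hjk : j ≠ k := (Finset.mem_erase.1 hj).1
    have hji : j ≠ i := (Finset.mem_erase.1 (Finset.mem_erase.1 hj).2).1
    have hcv : (CmapN n g i k v) j = v j := by
      simp only [CmapN]
      rw [Function.update_of_ne hjk, Function.update_of_ne hji]
    simp only [hf', hf, hcv]
  rw [hrest]
  have hvi : (CmapN n g i k v) i = ((v i).1, (v i).2 - (v i).1 + (v k).1 + 1) := by
    rw [CmapN]
    show (Function.update _ k _) i = _
    rw [Function.update_of_ne hne, Function.update_self]
  have hvk : (CmapN n g i k v) k = ((v k).1, (v k).2 + (v i).1 - (v k).1 - 1) := by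
    rw [CmapN]
    show (Function.update _ k _) k = _
    rw [Function.update_self]
  have hkey : f' i + f' k = f i + f k := by
    simp only [hf', hf, hvi, hvk, map_add, map_sub, map_one]
    generalize φ (v i).1 = a
    generalize φ (v i).2 = b
    generalize φ (v k).1 = c
    generalize φ (v k).2 = d
    revert a b c d
    decide
  rw [← add_assoc, ← add_assoc, hkey]

lemma parity_gens (hn2 : (2 : ℕ) ∣ n) {F : Function.End (ModNSpace n g)}
    (hF : F ∈ affineGensN n g) (v : ModNSpace n g) :
    vanishParityN n g hn2 (F v) = vanishParityN n g hn2 v := by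
  rcases hF with ⟨i, rfl⟩ | ⟨i, rfl⟩ | ⟨i, k, hik, rfl⟩
  · exact parityA hn2 i v
  · exact parityB hn2 i v
  · exact parityC hn2 (by intro h; rw [h] at hik; omega) v

lemma parity_closure (hn2 : (2 : ℕ) ∣ n) {F : Function.End (ModNSpace n g)}
    (hF : F ∈ Submonoid.closure (affineGensN n g)) (v : ModNSpace n g) :
    vanishParityN n g hn2 (F v) = vanishParityN n g hn2 v := by
  induction hF using Submonoid.closure_induction generalizing v with
  | mem x hx => exact parity_gens hn2 hx v
  | one => rfl
  | mul x y hx hy ihx ihy =>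
    have : (x * y) v = x (y v) := rfl
    rw [this, ihx, ihy]

lemma parity_mrel (hn2 : (2 : ℕ) ∣ n) {v w : ModNSpace n g} (h : MRel n g v w) :
    vanishParityN n g hn2 v = vanishParityN n g hn2 w := by
  obtain ⟨F, hF, rfl⟩ := h
  exact (parity_closure hn2 hF v).symm

lemma parityE0 (hn : 0 < n) (hn2 : (2 : ℕ) ∣ n) :
    vanishParityN n g hn2 (Efun n g 0) = (g : ZMod 2) := by
  rw [vanishParityN]
  have : (Finset.univ.filter fun i : Fin g =>
      ZMod.castHom hn2 (ZMod 2) ((Efun n g 0 i).1) = 0 ∧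
      ZMod.castHom hn2 (ZMod 2) ((Efun n g 0 i).2) = 0) = Finset.univ := by
    refine Finset.filter_true_of_mem fun j _ => ?_
    rw [Efun]
    constructor
    · rw [map_zero]
    · show ZMod.castHom hn2 (ZMod 2) (if (j : ℕ) = 0 then (0 : ZMod n) else 0) = 0
      split_ifs <;> rw [map_zero]
  rw [this, Finset.card_univ, Fintype.card_fin]

lemma parityE1 (hn : 0 < n) (hn2 : (2 : ℕ) ∣ n) (hg : 2 ≤ g) :
    vanishParityN n g hn2 (Efun n g 1) = ((g - 1 : ℕ) : ZMod 2) := by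
  classical
  rw [vanishParityN]
  have h0g : 0 < g := by omega
  have : (Finset.univ.filter fun i : Fin g =>
      ZMod.castHom hn2 (ZMod 2) ((Efun n g 1 i).1) = 0 ∧
      ZMod.castHom hn2 (ZMod 2) ((Efun n g 1 i).2) = 0)
      = Finset.univ.erase ⟨0, h0g⟩ := by
    ext j
    simp only [Finset.mem_filter, Finset.mem_univ, true_and, and_true,
      Finset.mem_erase]
    rw [show (Efun n g 1 j) = (0, if (j : ℕ) = 0 then (1 : ZMod n) else 0) from rfl]
    by_cases hj0 : (j : ℕ) = 0
    · rw [if_pos hj0]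
      constructor
      · rintro ⟨-, h2⟩
        rw [show ((0 : ZMod n), (1 : ZMod n)).2 = 1 from rfl, map_one] at h2
        exact absurd h2 one_ne_zero
      · intro hje
        exact absurd (Fin.ext hj0 : j = ⟨0, h0g⟩) hje
    · rw [if_neg hj0]
      constructor
      · intro _
        intro hje
        rw [hje] at hj0
        exact hj0 rfl
      · intro _
        exact ⟨by rw [show ((0 : ZMod n), (0 : ZMod n)).1 = 0 from rfl, map_zero],
          by rw [show ((0 : ZMod n), (0 : ZMod n)).2 = 0 from rfl, map_zero]⟩
  rw [this, Finset.card_erase_of_mem (Finset.mem_univ _), Finset.card_univ,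
    Fintype.card_fin]

lemma parity_ne (hn : 0 < n) (hn2 : (2 : ℕ) ∣ n) (hg : 2 ≤ g) :
    vanishParityN n g hn2 (Efun n g 0) ≠ vanishParityN n g hn2 (Efun n g 1) := by
  rw [parityE0 hn hn2, parityE1 hn hn2 hg]
  rw [Ne, ZMod.natCast_eq_natCast_iff]
  intro h
  have := Nat.ModEq.dvd h
  omega

end lemmas

/-- If `n` is even, the affine action on `(ℤ/nℤ)^{2g}` generated by the `A_i`,
`B_i` and `C_i` has exactly two orbits, distinguished by the mod-2
vanishing-number parity: two elements lie in the same orbit iff they have the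
same parity invariant, and both parities occur. -/
theorem affine_action_two_orbits_of_even (n g : ℕ) (hn : 0 < n)
    (hn2 : (2 : ℕ) ∣ n) (hg : 2 ≤ g) :
    (∀ v w : ModNSpace n g,
      (∃ F ∈ Submonoid.closure (affineGensN n g), F v = w) ↔
        vanishParityN n g hn2 v = vanishParityN n g hn2 w) ∧
    (∃ v w : ModNSpace n g, vanishParityN n g hn2 v ≠ vanishParityN n g hn2 w) := by
  constructor
  · intro v w
    constructor
    · rintro ⟨F, hF, rfl⟩
      exact (parity_closure hn2 hF v).symm
    · intro hp
      rcases canonE hn hn2 hg v with hv | hv <;> rcases canonE hn hn2 hg w with hw | hw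
      · exact rel_trans hv (rel_symm hn hw)
      · exfalso
        apply parity_ne hn hn2 hg
        rw [← parity_mrel hn2 hv, ← parity_mrel hn2 hw, hp]
      · exfalso
        apply parity_ne hn hn2 hg
        rw [← parity_mrel hn2 hw, ← parity_mrel hn2 hv, hp]
      · exact rel_trans hv (rel_symm hn hw)
  · exact ⟨Efun n g 0, Efun n g 1, parity_ne hn hn2 hg⟩
end

section
/- Let n be odd. Starting from any β ∈ Z/nZ, the set of elements reachable from (0,…,0,β) under the given affine action contains (0,…,0,β+2), and since 2 generates Z/nZ when n is odd, it contains (0,…,0,β') for every β' ∈ Z/nZ. -/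
def lastBetaElt (n g : ℕ) (hg : 2 ≤ g) (β : ZMod n) : ModNSpace n g :=
  fun j => if j = (⟨g - 1, by omega⟩ : Fin g) then (0, β) else 0

/-- Let `n` be odd.  The set of elements reachable from `(0,…,0,β)` under the
affine action contains `(0,…,0,β+2)`, and (since `2` generates `ℤ/nℤ` for odd
`n`) it contains `(0,…,0,β')` for every `β'`. -/
theorem reachable_from_last_beta_of_odd (n g : ℕ) (hn : 0 < n) (hodd : Odd n)
    (hg : 2 ≤ g) (β : ZMod n) :
    (∃ F ∈ Submonoid.closure (affineGensN n g),
        F (lastBetaElt n g hg β) = lastBetaElt n g hg (β + 2)) ∧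
    (∀ β' : ZMod n, ∃ F ∈ Submonoid.closure (affineGensN n g),
        F (lastBetaElt n g hg β) = lastBetaElt n g hg β') := by
  set i : Fin g := ⟨g - 2, by omega⟩ with hi
  set k : Fin g := ⟨g - 1, by omega⟩ with hk
  have hik : (i : ℕ) + 1 = (k : ℕ) := by simp [hi, hk]; omega
  have hne : i ≠ k := by
    intro h
    have := Fin.val_eq_val i k |>.mpr (by rw [h])
    simp [hi, hk] at this; omega
  set A : Function.End (ModNSpace n g) := AmapN n g i with hA
  set B : Function.End (ModNSpace n g) := BmapN n g i with hB
  set C : Function.End (ModNSpace n g) := CmapN n g i k with hC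
  -- word applied first-to-last: C,B,B,A,C,B,B,A,A,B,B,C,C,C,B,B,C
  set F : Function.End (ModNSpace n g) :=
    C * B * B * C * C * C * B * B * A * A * B * B * C * A * B * B * C with hF
  have hAmem : A ∈ Submonoid.closure (affineGensN n g) :=
    Submonoid.subset_closure (Or.inl ⟨i, hA⟩)
  have hBmem : B ∈ Submonoid.closure (affineGensN n g) :=
    Submonoid.subset_closure (Or.inr (Or.inl ⟨i, hB⟩))
  have hCmem : C ∈ Submonoid.closure (affineGensN n g) :=
    Submonoid.subset_closure (Or.inr (Or.inr ⟨i, k, hik, hC⟩))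
  have hFmem : F ∈ Submonoid.closure (affineGensN n g) := by
    rw [hF]
    exact mul_mem (mul_mem (mul_mem (mul_mem (mul_mem (mul_mem (mul_mem (mul_mem
      (mul_mem (mul_mem (mul_mem (mul_mem (mul_mem (mul_mem (mul_mem (mul_mem
      hCmem hBmem) hBmem) hCmem) hCmem) hCmem) hBmem) hBmem) hAmem) hAmem)
      hBmem) hBmem) hCmem) hAmem) hBmem) hBmem) hCmem
  have key : ∀ b : ZMod n, F (lastBetaElt n g hg b) = lastBetaElt n g hg (b + 2) := by
    intro b
    set S : (ZMod n × ZMod n) → (ZMod n × ZMod n) → ModNSpace n g :=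
      fun p q => Function.update (Function.update (fun _ => (0, 0)) i p) k q with hS
    have hSi : ∀ p q, S p q i = p := by
      intro p q; simp [hS, Function.update_of_ne hne]
    have hSk : ∀ p q, S p q k = q := by intro p q; simp [hS]
    have hui : ∀ p q r, Function.update (S p q) i r = S r q := by
      intro p q r; funext j
      rcases eq_or_ne j k with hjk | hjk
      · subst hjk; rw [Function.update_of_ne (Ne.symm hne), hSk, hSk]
      · rcases eq_or_ne j i with hji | hji
        · subst hji; rw [Function.update_self, hSi]
        · rw [Function.update_of_ne hji]
          simp [hS, Function.update_of_ne hji, Function.update_of_ne hjk]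
    have huk : ∀ p q r, Function.update (S p q) k r = S p r := by
      intro p q r; funext j
      rcases eq_or_ne j k with hjk | hjk
      · subst hjk; rw [Function.update_self, hSk]
      · rw [Function.update_of_ne hjk]
        simp [hS, Function.update_of_ne hjk]
    have hAS : ∀ p q, A (S p q) = S (p.1, p.2 - p.1) q := by
      intro p q; simp only [hA, AmapN, hSi, hui]
    have hBS : ∀ p q, B (S p q) = S (p.1 + p.2, p.2) q := by
      intro p q; simp only [hB, BmapN, hSi, hui]
    have hCS : ∀ p q, C (S p q) = S (p.1, p.2 - p.1 + q.1 + 1) (q.1, q.2 + p.1 - q.1 - 1) := by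
      intro p q; simp only [hC, CmapN, hSi, hSk, hui, huk]
    have hlast : ∀ c : ZMod n, lastBetaElt n g hg c = S (0, 0) (0, c) := by
      intro c; funext j
      by_cases hjk : j = k
      · subst hjk; simp [hS, lastBetaElt, hk]
      · by_cases hji : j = i <;>
          simp [hS, lastBetaElt, hjk, hji, hne, ← hk, Function.update_of_ne hjk] <;>
          rfl
    rw [hlast, hlast, hF]
    simp only [show ∀ (f g' : Function.End (ModNSpace n g)) (x : ModNSpace n g), (f * g') x = f (g' x) from fun _ _ _ => rfl]
    simp only [hAS, hBS, hCS]
    have hcong : ∀ p p' q q' : ZMod n × ZMod n, p = p' → q = q' → S p q = S p' q' := by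
      rintro p p' q q' rfl rfl; rfl
    apply hcong <;> refine Prod.ext ?_ ?_ <;> simp <;> ring
  have hpow : ∀ (m : ℕ) (b : ZMod n),
      (F ^ m) (lastBetaElt n g hg b) = lastBetaElt n g hg (b + 2 * m) := by
    intro m
    induction m with
    | zero => intro b; simp [Function.End.one_def]
    | succ m ih =>
      intro b
      rw [pow_succ, show ∀ (f g' : Function.End (ModNSpace n g)) (x : ModNSpace n g), (f * g') x = f (g' x) from fun _ _ _ => rfl, key b, ih]
      congr 1
      push_cast
      ring
  refine ⟨⟨F, hFmem, by simpa using key β⟩, ?_⟩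
  intro β'
  have h2 : IsUnit (2 : ZMod n) := by
    have hc : Nat.Coprime 2 n := Nat.coprime_two_left.mpr hodd
    have := (ZMod.isUnit_iff_coprime 2 n).mpr hc
    simpa using this
  haveI : NeZero n := ⟨hn.ne'⟩
  set m : ℕ := ((β' - β) * (2 : ZMod n)⁻¹).val with hm
  refine ⟨F ^ m, pow_mem hFmem m, ?_⟩
  rw [hpow m β]
  congr 1
  have hcast : ((m : ZMod n)) = (β' - β) * (2 : ZMod n)⁻¹ := by
    rw [hm, ZMod.natCast_val, ZMod.cast_id]
  rw [hcast, mul_comm ((β' - β)) ((2 : ZMod n)⁻¹), ← mul_assoc,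
    ZMod.mul_inv_of_unit _ h2, one_mul]
  ring
end

section
/- In the group with presentation ⟨h, a₁, b₁, …, a_g, b_g | [a₁,b₁]⋯[a_g,b_g] = h^{2g−2}, h central⟩, the element h generates the center when g ≥ 2, and the quotient by ⟨h⟩ is isomorphic to the surface group ⟨ā₁, b̄₁, …, ā_g, b̄_g | [ā₁,b̄₁]⋯[ā_g,b̄_g] = 1⟩; moreover the quotient by the normal closure of hⁿ yields a central extension 0 → Z/nZ → Γ̂ₙ → π₁(Σ_g) → 1 which splits whenever n divides 2g−2. -/
open scoped commutatorElement

/-- Generators of `π₁(T¹Σ_g)`: `none` is the fiber class `h`, `some (i, false)`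
is `aᵢ` and `some (i, true)` is `bᵢ`. -/
abbrev TBGen (g : ℕ) := Option (Fin g × Bool)

/-- The fiber generator `h`. -/
def hWord (g : ℕ) : FreeGroup (TBGen g) := FreeGroup.of none

/-- The generator `aᵢ`. -/
def aWord (g : ℕ) (i : Fin g) : FreeGroup (TBGen g) := FreeGroup.of (some (i, false))

/-- The generator `bᵢ`. -/
def bWord (g : ℕ) (i : Fin g) : FreeGroup (TBGen g) := FreeGroup.of (some (i, true))

/-- The relators of `π₁(T¹Σ_g)`: the main relator
`[a₁,b₁]⋯[a_g,b_g]·h^{−(2g−2)}`, and the centrality relators `[h, x]` for each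
generator `x`. -/
def tbRels (g : ℕ) : Set (FreeGroup (TBGen g)) :=
  {(List.ofFn fun i : Fin g => ⁅aWord g i, bWord g i⁆).prod * (hWord g ^ (2 * g - 2))⁻¹} ∪
    {r | ∃ x : TBGen g, r = ⁅hWord g, FreeGroup.of x⁆}

/-- The group `Γ̃ = π₁(T¹Σ_g)`, by its standard presentation. -/
def TangentBundleGroup (g : ℕ) := PresentedGroup (tbRels g)

instance (g : ℕ) : Group (TangentBundleGroup g) := by
  unfold TangentBundleGroup; infer_instance

/-- The surface group `π₁(Σ_g)` by its standard one-relator presentation. -/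
def SurfaceGroup (g : ℕ) :=
  PresentedGroup
    ({(List.ofFn fun i : Fin g =>
        ⁅FreeGroup.of (i, false), FreeGroup.of (i, true)⁆).prod} :
      Set (FreeGroup (Fin g × Bool)))

instance (g : ℕ) : Group (SurfaceGroup g) := by
  unfold SurfaceGroup; infer_instance

/-- The image of `h` in `Γ̃`. -/
def hElt (g : ℕ) : TangentBundleGroup g :=
  (PresentedGroup.of (rels := tbRels g) none : PresentedGroup (tbRels g))

set_option linter.unusedSectionVars false


open Monoid PushoutI Monoid.PushoutI.NormalWord Function

namespace AmalgamCenter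

variable {ι : Type*} {G : ι → Type*} [∀ i, Group (G i)] {H : Type*} [Group H]
  {φ : ∀ i, H →* G i} {d : Monoid.PushoutI.NormalWord.Transversal φ}

theorem letter_not_in_range (w : NormalWord d) {i : ι} {g : G i}
    (hmem : ⟨i, g⟩ ∈ w.toList) : g ∉ (φ i).range := by
  intro hr
  have hset : g ∈ d.set i := w.normalized i g hmem
  have hne : g ≠ 1 := w.toWord.ne_one ⟨i, g⟩ hmem
  have h2 : ((d.compl i).equiv g).2 = g :=
    (Subgroup.IsComplement.equiv_snd_eq_self_iff_mem (d.compl i) (one_mem _)).2 hset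
  have h1 : (((d.compl i).equiv g).2 : G i) = 1 :=
    (Subgroup.IsComplement.coe_equiv_snd_eq_one_iff_mem (d.compl i) (d.one_mem i)).2 hr
  exact hne (by rw [← h2]; exact h1)

theorem prod_eq_list_prod (w : NormalWord d) :
    w.prod = Monoid.PushoutI.base φ w.head *
      (w.toList.map fun l => Monoid.PushoutI.of l.1 l.2).prod := by
  rw [NormalWord.prod, Monoid.CoprodI.Word.prod, map_list_prod, List.map_map]
  congr 1

variable [DecidableEq ι] [∀ i, DecidableEq (G i)]

theorem build_word (L : List (Σ i, G i))
    (hch : L.IsChain fun a b => a.1 ≠ b.1)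
    (hr : ∀ l ∈ L, l.2 ∉ (φ l.1).range)
    (v : NormalWord d)
    (hlast : ∀ hL : L ≠ [], v.fstIdx ≠ some ((L.getLast hL).1)) :
    ∃ u : NormalWord d,
      u.prod = (L.map fun l => Monoid.PushoutI.of l.1 l.2).prod * v.prod ∧
      ((L = [] ∧ u = v) ∨ (∃ a L', L = a :: L' ∧ u.fstIdx = some a.1)) := by
  induction L with
  | nil => exact ⟨v, by simp, Or.inl ⟨rfl, rfl⟩⟩
  | cons a L' ih =>
    obtain ⟨u', hu'prod, hu'⟩ := ih hch.tail
      (fun l hl => hr l (List.mem_cons_of_mem _ hl))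
      (fun hL' => by
        have : (L'.getLast hL') = ((a :: L').getLast (by simp)) := by
          rw [List.getLast_cons hL']
        rw [this]
        exact hlast _)
    have hfst : u'.fstIdx ≠ some a.1 := by
      rcases hu' with ⟨rfl, rfl⟩ | ⟨b, L'', rfl, hb⟩
      · have := hlast (by simp)
        simpa using this
      · rw [hb]
        have hab : a.1 ≠ b.1 := (List.isChain_cons_cons.1 hch).1
        simpa using fun h => hab h.symm
    refine ⟨NormalWord.cons a.2 u' hfst (hr a List.mem_cons_self), ?_, ?_⟩
    · rw [prod_cons, hu'prod, List.map_cons, List.prod_cons, mul_assoc]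
    · refine Or.inr ⟨a, L', rfl, ?_⟩
      simp [NormalWord.cons, Monoid.CoprodI.Word.fstIdx, Monoid.CoprodI.Word.cons]


theorem cons_fstIdx {i : ι} (g : G i) (w : NormalWord d) (h1 : w.fstIdx ≠ some i)
    (h2 : g ∉ (φ i).range) :
    (NormalWord.cons g w h1 h2).fstIdx = some i := by
  simp [NormalWord.cons, Monoid.CoprodI.Word.fstIdx, Monoid.CoprodI.Word.cons]

theorem center_le_base_range (hφ : ∀ i, Function.Injective (φ i))
    (hproper : ∀ i, ∃ g : G i, g ∉ (φ i).range)
    (hnei : ∀ i : ι, ∃ j : ι, j ≠ i) :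
    Subgroup.center (PushoutI φ) ≤ (Monoid.PushoutI.base φ).range := by
  obtain ⟨d⟩ := NormalWord.transversal_nonempty φ hφ
  intro z hz
  classical
  set w : NormalWord d := z • NormalWord.empty with hwdef
  have hwprod : w.prod = z := by rw [hwdef, prod_smul, prod_empty, mul_one]
  by_cases hnil : w.toList = []
  · refine ⟨w.head, ?_⟩
    rw [← hwprod, prod_eq_list_prod, hnil]
    simp
  obtain ⟨a, L₀, hcons⟩ := List.exists_cons_of_ne_nil hnil
  obtain ⟨j, hji⟩ := hnei a.1
  obtain ⟨gj, hgj⟩ := hproper j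
  have hwfst : w.fstIdx ≠ some j := by
    simp only [Monoid.CoprodI.Word.fstIdx, hcons]
    simpa using fun h => hji h.symm
  have hC := NormalWord.prod_cons gj w hwfst hgj
  -- key: a normal word for `z * of j gj` starting at index `a.1`
  suffices hsuff : ∃ u : NormalWord d,
      u.prod = (w.toList.map fun l => Monoid.PushoutI.of l.1 l.2).prod *
        Monoid.PushoutI.of j gj ∧ u.fstIdx = some a.1 by
    obtain ⟨u, hup, huf⟩ := hsuff
    have h1 : (w.head • u).prod = (NormalWord.cons gj w hwfst hgj).prod := by
      rw [prod_base_smul, hC, hup, ← mul_assoc, ← prod_eq_list_prod, hwprod]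
      exact (Subgroup.mem_center_iff.1 hz (Monoid.PushoutI.of j gj)).symm
    have h2 := prod_injective h1
    have h3 : (w.head • u).fstIdx = u.fstIdx := rfl
    rw [h2, cons_fstIdx, huf] at h3
    exact (hji (Option.some_injective _ h3)).elim
  have hletters : ∀ l ∈ w.toList, l.2 ∉ (φ l.1).range :=
    fun l hl => letter_not_in_range w (by exact hl)
  obtain ⟨L', b, hconcat⟩ : ∃ L' b, w.toList = L' ++ [b] := by
    rcases List.eq_nil_or_concat w.toList with h | ⟨L', b, h⟩
    · exact absurd h hnil
    · exact ⟨L', b, by simpa [List.concat_eq_append] using h⟩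
  obtain ⟨jb, gb⟩ := b
  by_cases hbj : jb = j
  · subst hbj
    -- the last letter collides with `j` : merge it with `gj`
    have hL'ne : L' ≠ [] := by
      rintro rfl
      rw [hcons] at hconcat
      simp at hconcat
      exact hji (congrArg Sigma.fst hconcat.1).symm
    have hchain := w.toWord.chain_ne
    rw [hconcat] at hchain
    rw [List.isChain_append] at hchain
    obtain ⟨hchainL', -, hlink⟩ := hchain
    have hlinkb : ∀ hL' : L' ≠ [], ((L'.getLast hL').1 : ι) ≠ jb := by
      intro hL'
      have := hlink (L'.getLast hL') (List.getLast?_eq_getLast hL') ⟨jb, gb⟩ (by simp)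
      exact this
    have hv : ∃ v : NormalWord d, v.prod = Monoid.PushoutI.of jb (gb * gj) ∧
        ∀ hL' : L' ≠ [], v.fstIdx ≠ some ((L'.getLast hL').1) := by
      by_cases hrange : gb * gj ∈ (φ jb).range
      · obtain ⟨hH, hhH⟩ := hrange
        refine ⟨hH • NormalWord.empty, ?_, ?_⟩
        · rw [prod_base_smul, prod_empty, mul_one, ← hhH, Monoid.PushoutI.of_apply_eq_base]
        · intro hL'
          simp [NormalWord.empty, Monoid.CoprodI.Word.fstIdx, base_smul_def',
            Monoid.CoprodI.Word.empty]
      · refine ⟨NormalWord.cons (gb * gj) NormalWord.empty (by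
          simp [NormalWord.empty, Monoid.CoprodI.Word.fstIdx, Monoid.CoprodI.Word.empty]) hrange,
          ?_, ?_⟩
        · exact (NormalWord.prod_cons _ _ _ _).trans (by rw [prod_empty, mul_one])
        · intro hL'
          refine (cons_fstIdx _ _ _ _).trans_ne ?_
          simpa using fun h => hlinkb hL' h.symm
    obtain ⟨v, hvprod, hvfst⟩ := hv
    obtain ⟨u, huprod, hucase⟩ := build_word L' hchainL'
      (fun l hl => hletters l (by rw [hconcat]; exact List.mem_append_left _ hl)) v hvfst
    refine ⟨u, ?_, ?_⟩
    · rw [huprod, hvprod, hconcat]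
      simp [mul_assoc]
    · rcases hucase with ⟨rfl, -⟩ | ⟨a', L'', hL'eq, hfst⟩
      · exact absurd rfl hL'ne
      · rw [hfst]
        have : a' = a := by
          rw [hconcat, hL'eq] at hcons
          simpa using congrArg (fun t => List.head? t) hcons
        rw [this]
  · -- no collision : just append `of j gj` as a new letter
    have hv : (NormalWord.cons gj NormalWord.empty (by
        simp [NormalWord.empty, Monoid.CoprodI.Word.fstIdx, Monoid.CoprodI.Word.empty]) hgj
          : NormalWord d).fstIdx = some j := cons_fstIdx _ _ _ _
    obtain ⟨u, huprod, hucase⟩ := build_word w.toList w.toWord.chain_ne hletters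
      (NormalWord.cons gj NormalWord.empty (by
        simp [NormalWord.empty, Monoid.CoprodI.Word.fstIdx, Monoid.CoprodI.Word.empty]) hgj)
      (by
        intro hL
        rw [hv]
        have hlast2 : w.toList.getLast hL = ⟨jb, gb⟩ := by
          have h1 := List.getLast?_eq_getLast hL
          have h2 : w.toList.getLast? = some ⟨jb, gb⟩ := by rw [hconcat]; simp
          rw [h1] at h2
          exact Option.some.inj h2
        rw [hlast2]
        simpa using fun h => hbj h.symm)
    refine ⟨u, ?_, ?_⟩
    · rw [huprod]; congr 1; exact (NormalWord.prod_cons _ _ _ _).trans (by rw [prod_empty, mul_one])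
    · rcases hucase with ⟨hLnil, -⟩ | ⟨a', L'', hL'eq, hfst⟩
      · exact absurd hLnil hnil
      · rw [hfst]
        have : a' = a := by
          rw [hcons] at hL'eq
          exact (List.cons.injEq _ _ _ _ ▸ hL'eq).1.symm ▸ rfl
        rw [this]

end AmalgamCenter

namespace SurfCenter

open DihedralGroup Monoid Monoid.PushoutI

/-- The definitional embedding `ℤ → ZMod 0`. -/
def zi (x : ℤ) : ZMod 0 := x

lemma zi_injective : Function.Injective zi := fun _ _ h => h

lemma zi_add (a b : ℤ) : zi a + zi b = zi (a + b) := rfl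
lemma zi_neg (a : ℤ) : -(zi a) = zi (-a) := rfl
lemma zi_sub (a b : ℤ) : zi a - zi b = zi (a - b) := rfl
lemma zi_zero : (0 : ZMod 0) = zi 0 := rfl
lemma zi_one : (1 : ZMod 0) = zi 1 := rfl

lemma sr_inv (i : ZMod 0) : (sr i : DihedralGroup 0)⁻¹ = sr i :=
  inv_eq_of_mul_eq_one_right (sr_mul_self i)

lemma r_inv (k : ZMod 0) : (r k : DihedralGroup 0)⁻¹ = r (-k) :=
  inv_eq_of_mul_eq_one_right (by rw [r_mul_r, add_neg_cancel, one_def])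

lemma comm_sr_r : ⁅(sr (zi 0) : DihedralGroup 0), r (zi 1)⁆ = r (zi (-2)) := by
  rw [commutatorElement_def, sr_inv, r_inv, sr_mul_r, sr_mul_sr, zi_neg, zi_add, zi_sub,
    r_mul_r, zi_add]
  norm_num

lemma r_pow_nat (k : ℤ) (t : ℕ) :
    (r (zi k) : DihedralGroup 0) ^ t = r (zi (k * t)) := by
  induction t with
  | zero => rw [pow_zero, one_def, zi_zero]; norm_num
  | succ t ih =>
    rw [pow_succ, ih, r_mul_r, zi_add]
    congr 1
    push_cast
    ring

lemma r_zpow (k s : ℤ) :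
    (r (zi k) : DihedralGroup 0) ^ s = r (zi (k * s)) := by
  cases s with
  | ofNat t =>
    rw [Int.ofNat_eq_coe, zpow_natCast, r_pow_nat]
  | negSucc t =>
    rw [zpow_negSucc, r_pow_nat, r_inv, zi_neg]
    congr 1
    rw [Int.negSucc_eq]
    push_cast
    ring

/-- `[a,b]` in `F₂ = FreeGroup Bool`. -/
def cA : FreeGroup Bool := ⁅FreeGroup.of false, FreeGroup.of true⁆

/-- the product of commutators in the free group on `Fin m × Bool`. -/
def cB (m : ℕ) : FreeGroup (Fin m × Bool) :=
  (List.ofFn fun i : Fin m => ⁅FreeGroup.of (i, false), FreeGroup.of (i, true)⁆).prod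

lemma map_comm_prod {M N : Type*} [Group M] [Group N] (f : M →* N) {k : ℕ}
    (x y : Fin k → M) :
    f ((List.ofFn fun i => ⁅x i, y i⁆).prod) =
      (List.ofFn fun i => ⁅f (x i), f (y i)⁆).prod := by
  rw [map_list_prod, List.map_ofFn]
  congr 1
  exact congrArg List.ofFn (funext fun i => map_commutatorElement f (x i) (y i))

def ρA : FreeGroup Bool →* DihedralGroup 0 :=
  FreeGroup.lift fun b => cond b (r (zi 1)) (sr (zi 0))

lemma ρA_cA : ρA cA = r (zi (-2)) := by
  rw [cA, map_commutatorElement]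
  simp only [ρA, FreeGroup.lift_apply_of]
  exact comm_sr_r

def ρB (m : ℕ) : FreeGroup (Fin m × Bool) →* DihedralGroup 0 :=
  FreeGroup.lift fun p => if p.1.val = 0 then (cond p.2 (r (zi 1)) (sr (zi 0))) else 1

lemma ρB_cB (m : ℕ) : ρB (m + 1) (cB (m + 1)) = r (zi (-2)) := by
  rw [cB, map_comm_prod, List.ofFn_succ, List.prod_cons]
  have h0 : ⁅ρB (m+1) (FreeGroup.of ((0 : Fin (m+1)), false)),
      ρB (m+1) (FreeGroup.of ((0 : Fin (m+1)), true))⁆ = r (zi (-2)) := by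
    simp only [ρB, FreeGroup.lift_apply_of]
    norm_num
    exact comm_sr_r
  have h1 : (List.ofFn fun i : Fin m =>
      ⁅ρB (m+1) (FreeGroup.of ((i.succ : Fin (m+1)), false)),
        ρB (m+1) (FreeGroup.of ((i.succ : Fin (m+1)), true))⁆).prod = 1 := by
    apply List.prod_eq_one
    intro x hx
    obtain ⟨i, rfl⟩ := List.mem_ofFn.1 hx
    simp only [ρB, FreeGroup.lift_apply_of]
    rw [if_neg (by simp [Fin.val_succ]), if_neg (by simp [Fin.val_succ])]
    simp
  rw [h0, h1, mul_one]

lemma r_zi_eq_one {a : ℤ} (h : (r (zi a) : DihedralGroup 0) = 1) : a = 0 := by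
  rw [one_def, zi_zero] at h
  have h2 : zi a = zi 0 := by injection h
  exact zi_injective h2

lemma cA_zpow_eq_one {s : ℤ} (h : cA ^ s = 1) : s = 0 := by
  have h1 := congrArg ρA h
  rw [map_zpow, ρA_cA, map_one, r_zpow] at h1
  have := r_zi_eq_one h1
  omega

lemma cB_zpow_eq_one {m : ℕ} {s : ℤ} (h : (cB (m+1)) ^ s = 1) : s = 0 := by
  have h1 := congrArg (ρB (m+1)) h
  rw [map_zpow, ρB_cB, map_one, r_zpow] at h1
  have := r_zi_eq_one h1
  omega

lemma cA_comm_detect {s : ℤ}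
    (h : FreeGroup.of false * cA ^ s = cA ^ s * FreeGroup.of false) : s = 0 := by
  have h1 := congrArg ρA h
  have hof : ρA (FreeGroup.of false) = sr (zi 0) := by simp [ρA]
  rw [map_mul, map_mul, map_zpow, ρA_cA, r_zpow, hof, sr_mul_r, r_mul_sr, zi_add, zi_sub] at h1
  have h2 : zi (0 + -2 * s) = zi (0 - -2 * s) := by injection h1
  have h3 := zi_injective h2
  omega

end SurfCenter

namespace SurfCenter

abbrev SFam (m : ℕ) (b : Bool) := FreeGroup (cond b (Fin m × Bool) Bool)

def sφ (m : ℕ) : ∀ b, Multiplicative ℤ →* SFam m b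
  | false => zpowersHom _ cA
  | true => zpowersHom _ (cB m)⁻¹

lemma sφ_false_apply (m : ℕ) (x : Multiplicative ℤ) :
    sφ m false x = cA ^ (Multiplicative.toAdd x) := rfl

lemma sφ_true_apply (m : ℕ) (x : Multiplicative ℤ) :
    sφ m true x = ((cB m)⁻¹) ^ (Multiplicative.toAdd x) := rfl

lemma zpowersHom_inj {X : Type*} [Group X] {c : X} (hc : ∀ s : ℤ, c ^ s = 1 → s = 0) :
    Function.Injective (zpowersHom X c) := by
  intro u v huv
  have h1 : c ^ (Multiplicative.toAdd u) = c ^ (Multiplicative.toAdd v) := huv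
  have h2 : c ^ (Multiplicative.toAdd u - Multiplicative.toAdd v) = 1 := by
    rw [zpow_sub, h1, mul_inv_cancel]
  have h3 := hc _ h2
  have h4 : Multiplicative.toAdd u = Multiplicative.toAdd v := by omega
  exact Multiplicative.toAdd.injective h4

lemma sφ_injective (m : ℕ) : ∀ b, Function.Injective (sφ (m+1) b) := by
  intro b
  cases b
  · exact zpowersHom_inj fun s hs => cA_zpow_eq_one hs
  · refine zpowersHom_inj fun s hs => ?_
    rw [inv_zpow, ← zpow_neg] at hs
    have := cB_zpow_eq_one hs
    omega

lemma lift_cA_comm {X : Type*} [CommGroup X] (f : Bool → X) :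
    FreeGroup.lift f cA = 1 := by
  rw [cA, map_commutatorElement]
  exact commutatorElement_eq_one_iff_commute.2 (Commute.all _ _)

lemma lift_cB_comm {m : ℕ} {X : Type*} [CommGroup X] (f : Fin m × Bool → X) :
    FreeGroup.lift f (cB m) = 1 := by
  rw [cB, map_comm_prod]
  apply List.prod_eq_one
  intro x hx
  obtain ⟨i, rfl⟩ := List.mem_ofFn.1 hx
  exact commutatorElement_eq_one_iff_commute.2 (Commute.all _ _)

lemma proper_false (m : ℕ) :
    ∃ x : SFam m false, x ∉ (sφ m false).range := by
  refine ⟨FreeGroup.of false, ?_⟩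
  rintro ⟨y, hy⟩
  have h1 := congrArg
    (FreeGroup.lift fun b : Bool => cond b (1 : Multiplicative ℤ) (Multiplicative.ofAdd 1)) hy
  rw [sφ_false_apply, map_zpow, lift_cA_comm, one_zpow, FreeGroup.lift_apply_of] at h1
  have h2 := congrArg Multiplicative.toAdd h1
  simp at h2

lemma proper_true (m : ℕ) :
    ∃ x : SFam (m+1) true, x ∉ (sφ (m+1) true).range := by
  refine ⟨FreeGroup.of ((0 : Fin (m+1)), false), ?_⟩
  rintro ⟨y, hy⟩
  have h1 := congrArg
    (FreeGroup.lift fun p : Fin (m+1) × Bool => cond p.2 (1 : Multiplicative ℤ)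
      (Multiplicative.ofAdd 1)) hy
  rw [sφ_true_apply, map_zpow, map_inv, lift_cB_comm, inv_one, one_zpow,
    FreeGroup.lift_apply_of] at h1
  have h2 := congrArg Multiplicative.toAdd h1
  simp at h2

theorem amal_center_eq_bot (m : ℕ) :
    Subgroup.center (Monoid.PushoutI (sφ (m+1))) = ⊥ := by
  rw [eq_bot_iff]
  intro z hz
  classical
  have hinj := sφ_injective m
  have hle := AmalgamCenter.center_le_base_range (φ := sφ (m+1)) hinj
    (fun b => by cases b
                 · exact proper_false (m+1)
                 · exact proper_true m)
    (fun b => ⟨!b, by cases b <;> simp⟩) hz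
  obtain ⟨x, hx⟩ := hle
  have h1 : Monoid.PushoutI.of (φ := sφ (m+1)) false (cA ^ (Multiplicative.toAdd x)) = z := by
    rw [← hx, ← Monoid.PushoutI.of_apply_eq_base (sφ (m+1)) false x]
    rfl
  have h2 := Subgroup.mem_center_iff.1 hz
    (Monoid.PushoutI.of (φ := sφ (m+1)) false (FreeGroup.of false))
  rw [← h1, ← map_mul, ← map_mul] at h2
  have h3 := Monoid.PushoutI.of_injective hinj false h2
  have h4 := cA_comm_detect h3
  have h5 : z = 1 := by rw [← h1, h4, zpow_zero, map_one]
  simp [h5]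

end SurfCenter

namespace SurfCenter

open Monoid

def surfRel (g : ℕ) : FreeGroup (Fin g × Bool) :=
  (List.ofFn fun i : Fin g => ⁅FreeGroup.of (i, false), FreeGroup.of (i, true)⁆).prod

lemma lift_surfRel {T : Type*} [Group T] (m : ℕ) (f : Fin (m+1) × Bool → T) :
    FreeGroup.lift f (surfRel (m+1)) =
      ⁅f (0, false), f (0, true)⁆ *
        FreeGroup.lift (fun p : Fin m × Bool => f (p.1.succ, p.2)) (cB m) := by
  rw [surfRel,
    map_comm_prod (FreeGroup.lift f) (fun i : Fin (m+1) => FreeGroup.of (i, false))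
      (fun i => FreeGroup.of (i, true)),
    cB,
    map_comm_prod (FreeGroup.lift fun p : Fin m × Bool => f (p.1.succ, p.2))
      (fun i : Fin m => FreeGroup.of (i, false)) (fun i => FreeGroup.of (i, true)),
    List.ofFn_succ, List.prod_cons]
  simp only [FreeGroup.lift_apply_of]

/-- the map `Fin (m+2) × Bool → PushoutI` sending generators to generators. -/
def genMap (m : ℕ) (p : Fin (m+2) × Bool) : Monoid.PushoutI (sφ (m+1)) :=
  Fin.cases (Monoid.PushoutI.of (φ := sφ (m+1)) false (FreeGroup.of p.2))
    (fun i => Monoid.PushoutI.of (φ := sφ (m+1)) true (FreeGroup.of (i, p.2))) p.1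

lemma genMap_zero (m : ℕ) (b : Bool) :
    genMap m (0, b) = Monoid.PushoutI.of (φ := sφ (m+1)) false (FreeGroup.of b) := by
  simp [genMap]

lemma genMap_succ (m : ℕ) (i : Fin (m+1)) (b : Bool) :
    genMap m (i.succ, b) = Monoid.PushoutI.of (φ := sφ (m+1)) true (FreeGroup.of (i, b)) := by
  simp [genMap]

lemma sφ_false_ofAdd_one (m : ℕ) : sφ m false (Multiplicative.ofAdd 1) = cA := by
  rw [sφ_false_apply]; simp

lemma sφ_true_ofAdd_one (m : ℕ) : sφ m true (Multiplicative.ofAdd 1) = (cB m)⁻¹ := by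
  rw [sφ_true_apply]; simp

lemma genMap_rel (m : ℕ) : FreeGroup.lift (genMap m) (surfRel (m+2)) = 1 := by
  rw [lift_surfRel]
  have h0 : ⁅genMap m (0, false), genMap m (0, true)⁆ =
      Monoid.PushoutI.of (φ := sφ (m+1)) false cA := by
    rw [genMap_zero, genMap_zero, ← map_commutatorElement, cA]
  have h1 : FreeGroup.lift (fun p : Fin (m+1) × Bool => genMap m (p.1.succ, p.2)) (cB (m+1)) =
      Monoid.PushoutI.of (φ := sφ (m+1)) true (cB (m+1)) := by
    rw [cB,
      map_comm_prod (FreeGroup.lift fun p : Fin (m+1) × Bool => genMap m (p.1.succ, p.2))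
        (fun i : Fin (m+1) => FreeGroup.of (i, false)) (fun i => FreeGroup.of (i, true)),
      map_comm_prod (Monoid.PushoutI.of (φ := sφ (m+1)) true)
        (fun i : Fin (m+1) => FreeGroup.of (i, false)) (fun i => FreeGroup.of (i, true))]
    simp only [FreeGroup.lift_apply_of, genMap_succ]
  have e1 : Monoid.PushoutI.of (φ := sφ (m+1)) false cA =
      Monoid.PushoutI.base (sφ (m+1)) (Multiplicative.ofAdd 1) := by
    rw [← sφ_false_ofAdd_one (m+1), Monoid.PushoutI.of_apply_eq_base]
  have e2 : Monoid.PushoutI.of (φ := sφ (m+1)) true (cB (m+1)) =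
      (Monoid.PushoutI.base (sφ (m+1)) (Multiplicative.ofAdd 1))⁻¹ := by
    rw [← Monoid.PushoutI.of_apply_eq_base (sφ (m+1)) true (Multiplicative.ofAdd 1),
      sφ_true_ofAdd_one, map_inv, inv_inv]
  rw [h0, h1, e1, e2, mul_inv_cancel]

def surfToAmal (m : ℕ) : SurfaceGroup (m+2) →* Monoid.PushoutI (sφ (m+1)) :=
  PresentedGroup.toGroup (f := genMap m) <| by
    intro r hr
    rw [Set.mem_singleton_iff] at hr
    subst hr
    exact genMap_rel m

lemma surfToAmal_of (m : ℕ) (p : Fin (m+2) × Bool) :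
    surfToAmal m (PresentedGroup.of p) = genMap m p :=
  PresentedGroup.toGroup.of _

def fA (m : ℕ) : SFam (m+1) false →* SurfaceGroup (m+2) :=
  FreeGroup.lift fun b => PresentedGroup.of ((0 : Fin (m+2)), b)

def fB (m : ℕ) : SFam (m+1) true →* SurfaceGroup (m+2) :=
  FreeGroup.lift fun p => PresentedGroup.of (p.1.succ, p.2)

lemma fA_of (m : ℕ) (b : Bool) : fA m (FreeGroup.of b) = PresentedGroup.of ((0 : Fin (m+2)), b) :=
  FreeGroup.lift_apply_of

lemma fB_of (m : ℕ) (p : Fin (m+1) × Bool) :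
    fB m (FreeGroup.of p) = PresentedGroup.of (p.1.succ, p.2) :=
  FreeGroup.lift_apply_of

lemma surf_rel_eq_one (m : ℕ) : fA m cA * fB m (cB (m+1)) = 1 := by
  have hmk : (PresentedGroup.mk ({surfRel (m+2)} : Set (FreeGroup (Fin (m+2) × Bool)))
      (surfRel (m+2))) = 1 := by
    apply (QuotientGroup.eq_one_iff _).2
    exact Subgroup.subset_normalClosure (Set.mem_singleton _)
  have hmk2 : (PresentedGroup.mk ({surfRel (m+2)} : Set (FreeGroup (Fin (m+2) × Bool)))) =
      FreeGroup.lift fun p => PresentedGroup.of p := by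
    apply FreeGroup.ext_hom
    intro p
    rfl
  rw [hmk2, lift_surfRel] at hmk
  have hA : fA m cA = ⁅(PresentedGroup.of ((0 : Fin (m+2)), false) :
      PresentedGroup ({surfRel (m+2)} : Set (FreeGroup (Fin (m+2) × Bool)))),
      (PresentedGroup.of ((0 : Fin (m+2)), true) :
      PresentedGroup ({surfRel (m+2)} : Set (FreeGroup (Fin (m+2) × Bool))))⁆ := by
    rw [fA, cA, map_commutatorElement]
    exact congrArg₂ (fun a b => ⁅a, b⁆) FreeGroup.lift_apply_of FreeGroup.lift_apply_of
  have hB : fB m (cB (m+1)) =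
      FreeGroup.lift (fun p : Fin (m+1) × Bool =>
        (PresentedGroup.of (p.1.succ, p.2) :
          PresentedGroup ({surfRel (m+2)} : Set (FreeGroup (Fin (m+2) × Bool))))) (cB (m+1)) :=
    rfl
  rw [hA, hB]
  exact hmk

def amalToSurf (m : ℕ) : Monoid.PushoutI (sφ (m+1)) →* SurfaceGroup (m+2) :=
  Monoid.PushoutI.lift
    (fun b => match b with
      | false => fA m
      | true => fB m)
    (zpowersHom _ (fA m cA)) <| by
    intro b
    cases b
    · exact MonoidHom.ext fun x => by
        rw [MonoidHom.comp_apply, sφ_false_apply, map_zpow, zpowersHom_apply]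
    · exact MonoidHom.ext fun x => by
        rw [MonoidHom.comp_apply, sφ_true_apply, map_zpow, zpowersHom_apply]
        congr 1
        rw [map_inv]
        exact inv_eq_of_mul_eq_one_left (surf_rel_eq_one m)

lemma amalToSurf_of_false (m : ℕ) (x : SFam (m+1) false) :
    amalToSurf m (Monoid.PushoutI.of (φ := sφ (m+1)) false x) = fA m x :=
  Monoid.PushoutI.lift_of _ _ _ _

lemma amalToSurf_of_true (m : ℕ) (x : SFam (m+1) true) :
    amalToSurf m (Monoid.PushoutI.of (φ := sφ (m+1)) true x) = fB m x :=
  Monoid.PushoutI.lift_of _ _ _ _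

lemma comp1 (m : ℕ) :
    (amalToSurf m).comp (surfToAmal m) = MonoidHom.id (SurfaceGroup (m+2)) := by
  apply PresentedGroup.ext
  rintro ⟨i, b⟩
  show (amalToSurf m) ((surfToAmal m) (PresentedGroup.of (i, b))) = PresentedGroup.of (i, b)
  rw [surfToAmal_of]
  induction i using Fin.cases with
  | zero => rw [genMap_zero, amalToSurf_of_false, fA_of]
  | succ i => rw [genMap_succ, amalToSurf_of_true, fB_of]

lemma comp2 (m : ℕ) :
    (surfToAmal m).comp (amalToSurf m) = MonoidHom.id (Monoid.PushoutI (sφ (m+1))) := by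
  apply Monoid.PushoutI.hom_ext_nonempty
  intro b
  cases b
  · apply FreeGroup.ext_hom
    intro x
    show (surfToAmal m) ((amalToSurf m) (Monoid.PushoutI.of (φ := sφ (m+1)) false
      (FreeGroup.of x))) = Monoid.PushoutI.of (φ := sφ (m+1)) false (FreeGroup.of x)
    rw [amalToSurf_of_false, fA_of, surfToAmal_of, genMap_zero]
  · apply FreeGroup.ext_hom
    rintro ⟨i, b⟩
    show (surfToAmal m) ((amalToSurf m) (Monoid.PushoutI.of (φ := sφ (m+1)) true
      (FreeGroup.of (i, b)))) = Monoid.PushoutI.of (φ := sφ (m+1)) true (FreeGroup.of (i, b))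
    rw [amalToSurf_of_true, fB_of, surfToAmal_of, genMap_succ]

def surfEquivAmal (m : ℕ) : SurfaceGroup (m+2) ≃* Monoid.PushoutI (sφ (m+1)) :=
  MonoidHom.toMulEquiv (surfToAmal m) (amalToSurf m) (comp1 m) (comp2 m)

theorem surface_center_eq_bot (m : ℕ) :
    Subgroup.center (SurfaceGroup (m+2)) = ⊥ := by
  rw [eq_bot_iff]
  intro z hz
  have hc : surfEquivAmal m z ∈ Subgroup.center (Monoid.PushoutI (sφ (m+1))) := by
    rw [Subgroup.mem_center_iff]
    intro y
    have h1 := Subgroup.mem_center_iff.1 hz ((surfEquivAmal m).symm y)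
    have h2 := congrArg (surfEquivAmal m) h1
    rw [map_mul, map_mul, MulEquiv.apply_symm_apply] at h2
    exact h2
  rw [amal_center_eq_bot, Subgroup.mem_bot] at hc
  have h3 : z = 1 := by
    have h4 := congrArg (surfEquivAmal m).symm hc
    rwa [MulEquiv.symm_apply_apply, map_one] at h4
  simp [h3]

end SurfCenter

namespace TB

open SurfCenter

/-! ### Basic structure of `Γ̃` -/

/-- generator of `Γ̃` -/
def ofT (g : ℕ) (x : TBGen g) : TangentBundleGroup g := PresentedGroup.of x

/-- generator of `π₁(Σ_g)` -/
def ofS (g : ℕ) (p : Fin g × Bool) : SurfaceGroup g := PresentedGroup.of p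

lemma mk_rel_one {g : ℕ} {r : FreeGroup (TBGen g)} (hr : r ∈ tbRels g) :
    (PresentedGroup.mk (tbRels g) r : TangentBundleGroup g) = 1 :=
  (QuotientGroup.eq_one_iff _).2 (Subgroup.subset_normalClosure hr)

lemma hElt_comm_of (g : ℕ) (x : TBGen g) :
    hElt g * ofT g x = ofT g x * hElt g := by
  have h1 : (PresentedGroup.mk (tbRels g) ⁅hWord g, FreeGroup.of x⁆ :
      TangentBundleGroup g) = 1 :=
    mk_rel_one (Set.mem_union_right _ ⟨x, rfl⟩)
  rw [map_commutatorElement] at h1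
  exact commutatorElement_eq_one_iff_commute.1 h1

lemma hElt_mem_center (g : ℕ) : hElt g ∈ Subgroup.center (TangentBundleGroup g) := by
  rw [Subgroup.mem_center_iff]
  intro y
  have hy : y ∈ Subgroup.centralizer {hElt g} := by
    refine PresentedGroup.generated_by (tbRels g) _ ?_ y
    intro x
    refine Subgroup.mem_centralizer_iff.2 ?_
    intro h hh
    replace hh := Set.mem_singleton_iff.1 hh
    subst hh
    exact hElt_comm_of g x
  exact (Subgroup.mem_centralizer_iff.1 hy (hElt g) rfl).symm

lemma main_rel (g : ℕ) :
    (List.ofFn fun i : Fin g =>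
      ⁅ofT g (some (i, false)), ofT g (some (i, true))⁆).prod = hElt g ^ (2 * g - 2) := by
  have h1 : (PresentedGroup.mk (tbRels g)
      ((List.ofFn fun i : Fin g => ⁅aWord g i, bWord g i⁆).prod *
        (hWord g ^ (2 * g - 2))⁻¹) : TangentBundleGroup g) = 1 :=
    mk_rel_one (Set.mem_union_left _ rfl)
  rw [map_mul, map_inv, map_pow, mul_inv_eq_one,
    map_comm_prod (PresentedGroup.mk (tbRels g)) (aWord g) (bWord g)] at h1
  exact h1

lemma surf_mk_rel (g : ℕ) :
    (List.ofFn fun i : Fin g =>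
      ⁅ofS g (i, false), ofS g (i, true)⁆).prod = 1 := by
  have h1 : (PresentedGroup.mk ({surfRel g} : Set (FreeGroup (Fin g × Bool)))
      (surfRel g)) = 1 :=
    (QuotientGroup.eq_one_iff _).2 (Subgroup.subset_normalClosure rfl)
  rw [surfRel, map_comm_prod (PresentedGroup.mk _)
    (fun i : Fin g => FreeGroup.of (i, false)) (fun i => FreeGroup.of (i, true))] at h1
  exact h1

/-! ### The projection `Γ̃ → π₁(Σ_g)` -/

def tbGenMap (g : ℕ) : TBGen g → SurfaceGroup g :=
  fun x => Option.elim x 1 fun p => ofS g p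

lemma lift_tbGenMap_h (g : ℕ) :
    FreeGroup.lift (tbGenMap g) (hWord g) = (1 : SurfaceGroup g) :=
  FreeGroup.lift_apply_of

lemma lift_tbGenMap_a (g : ℕ) (i : Fin g) :
    FreeGroup.lift (tbGenMap g) (aWord g i) = ofS g (i, false) :=
  FreeGroup.lift_apply_of

lemma lift_tbGenMap_b (g : ℕ) (i : Fin g) :
    FreeGroup.lift (tbGenMap g) (bWord g i) = ofS g (i, true) :=
  FreeGroup.lift_apply_of

def toSurf (g : ℕ) : TangentBundleGroup g →* SurfaceGroup g :=
  PresentedGroup.toGroup (f := tbGenMap g) <| by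
    rintro r (rfl | ⟨x, rfl⟩)
    · rw [map_mul, map_inv, map_pow,
        map_comm_prod (FreeGroup.lift (tbGenMap g)) (aWord g) (bWord g)]
      have he : (List.ofFn fun i : Fin g =>
          ⁅FreeGroup.lift (tbGenMap g) (aWord g i),
            FreeGroup.lift (tbGenMap g) (bWord g i)⁆).prod = (1 : SurfaceGroup g) := by
        have hfun : (fun i : Fin g =>
            ⁅FreeGroup.lift (tbGenMap g) (aWord g i),
              FreeGroup.lift (tbGenMap g) (bWord g i)⁆) = (fun i : Fin g =>
            ⁅ofS g (i, false), ofS g (i, true)⁆) := by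
          funext i
          rw [lift_tbGenMap_a, lift_tbGenMap_b]
        rw [hfun]
        exact surf_mk_rel g
      rw [lift_tbGenMap_h, he, one_pow, inv_one, mul_one]
    · rw [map_commutatorElement, lift_tbGenMap_h]
      exact commutatorElement_eq_one_iff_commute.2 (Commute.one_left _)

lemma toSurf_of_some (g : ℕ) (p : Fin g × Bool) :
    toSurf g (ofT g (some p)) = ofS g p :=
  PresentedGroup.toGroup.of _

lemma toSurf_h (g : ℕ) : toSurf g (hElt g) = 1 :=
  PresentedGroup.toGroup.of _

lemma toSurf_surjective (g : ℕ) : Function.Surjective (toSurf g) := by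
  intro y
  refine PresentedGroup.generated_by _ (toSurf g).range ?_ y
  intro p
  exact ⟨ofT g (some p), toSurf_of_some g p⟩

/-! ### The quotient `Γ̃ ⧸ ⟨⟨h⟩⟩` -/

lemma h_mem_N1 (g : ℕ) : hElt g ∈ Subgroup.normalClosure {hElt g} :=
  Subgroup.subset_normalClosure rfl

def toSurfBar (g : ℕ) :
    (TangentBundleGroup g ⧸ Subgroup.normalClosure {hElt g}) →* SurfaceGroup g :=
  QuotientGroup.lift _ (toSurf g) <| by
    refine Subgroup.normalClosure_le_normal ?_
    intro x hx
    rw [Set.mem_singleton_iff] at hx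
    subst hx
    exact toSurf_h g

def surfToQuot (g : ℕ) :
    SurfaceGroup g →* (TangentBundleGroup g ⧸ Subgroup.normalClosure {hElt g}) :=
  PresentedGroup.toGroup
    (f := fun p => QuotientGroup.mk' (Subgroup.normalClosure {hElt g})
      (ofT g (some p))) <| by
    rintro r rfl
    show FreeGroup.lift (fun p => QuotientGroup.mk' (Subgroup.normalClosure {hElt g})
      (ofT g (some p))) (surfRel g) = 1
    rw [surfRel, map_comm_prod (FreeGroup.lift _)
      (fun i : Fin g => FreeGroup.of (i, false)) (fun i => FreeGroup.of (i, true))]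
    have hfun : (fun i : Fin g =>
        ⁅FreeGroup.lift (fun p => QuotientGroup.mk' (Subgroup.normalClosure {hElt g})
            (ofT g (some p))) (FreeGroup.of (i, false)),
          FreeGroup.lift (fun p => QuotientGroup.mk' (Subgroup.normalClosure {hElt g})
            (ofT g (some p))) (FreeGroup.of (i, true))⁆) = (fun i : Fin g =>
        ⁅QuotientGroup.mk' (Subgroup.normalClosure {hElt g}) (ofT g (some (i, false))),
          QuotientGroup.mk' (Subgroup.normalClosure {hElt g})
            (ofT g (some (i, true)))⁆) := by
      funext i
      rw [FreeGroup.lift_apply_of, FreeGroup.lift_apply_of]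
    rw [hfun, ← map_comm_prod (QuotientGroup.mk' (Subgroup.normalClosure {hElt g}))
      (fun i : Fin g => ofT g (some (i, false))) (fun i => ofT g (some (i, true))),
      main_rel g, map_pow]
    have h1 : QuotientGroup.mk' (Subgroup.normalClosure {hElt g}) (hElt g) = 1 :=
      (QuotientGroup.eq_one_iff _).2 (h_mem_N1 g)
    rw [h1, one_pow]

lemma quot_comp1 (g : ℕ) :
    (toSurfBar g).comp (surfToQuot g) = MonoidHom.id (SurfaceGroup g) := by
  apply PresentedGroup.ext
  intro p
  show toSurfBar g ((surfToQuot g) (ofS g p)) = ofS g p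
  have h1 : surfToQuot g (ofS g p) =
      QuotientGroup.mk' (Subgroup.normalClosure {hElt g}) (ofT g (some p)) :=
    PresentedGroup.toGroup.of _
  rw [h1]
  show toSurf g (ofT g (some p)) = ofS g p
  exact toSurf_of_some g p

lemma quot_comp2 (g : ℕ) :
    (surfToQuot g).comp (toSurfBar g) =
      MonoidHom.id (TangentBundleGroup g ⧸ Subgroup.normalClosure {hElt g}) := by
  apply QuotientGroup.monoidHom_ext
  apply PresentedGroup.ext
  intro x
  show surfToQuot g (toSurfBar g (QuotientGroup.mk' _ (ofT g x))) =
    QuotientGroup.mk' _ (ofT g x)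
  have h1 : toSurfBar g (QuotientGroup.mk' (Subgroup.normalClosure {hElt g})
      (ofT g x)) = toSurf g (ofT g x) := rfl
  rw [h1]
  cases x with
  | none =>
    have h2 : toSurf g (ofT g none) = 1 := toSurf_h g
    rw [h2, map_one]
    exact ((QuotientGroup.eq_one_iff _).2 (h_mem_N1 g)).symm
  | some p =>
    rw [toSurf_of_some]
    exact PresentedGroup.toGroup.of _

def quotEquivSurf (g : ℕ) :
    (TangentBundleGroup g ⧸ Subgroup.normalClosure {hElt g}) ≃* SurfaceGroup g :=
  MonoidHom.toMulEquiv (toSurfBar g) (surfToQuot g) (quot_comp2 g) (quot_comp1 g)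

lemma ker_toSurf (g : ℕ) :
    (toSurf g).ker = Subgroup.normalClosure {hElt g} := by
  apply le_antisymm
  · intro x hx
    rw [MonoidHom.mem_ker] at hx
    have h1 : toSurfBar g (QuotientGroup.mk' (Subgroup.normalClosure {hElt g}) x) = 1 := hx
    have h2 : QuotientGroup.mk' (Subgroup.normalClosure {hElt g}) x = 1 := by
      have h3 := congrArg (surfToQuot g) h1
      rw [map_one] at h3
      have h4 := DFunLike.congr_fun (quot_comp2 g)
        (QuotientGroup.mk' (Subgroup.normalClosure {hElt g}) x)
      rw [MonoidHom.comp_apply, MonoidHom.id_apply] at h4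
      rw [← h4]
      exact h3
    rwa [← QuotientGroup.eq_one_iff]
  · refine Subgroup.normalClosure_le_normal ?_
    intro x hx
    rw [Set.mem_singleton_iff] at hx
    subst hx
    exact toSurf_h g

lemma normalClosure_h_eq_zpowers (g : ℕ) :
    Subgroup.normalClosure {hElt g} = Subgroup.zpowers (hElt g) := by
  have hle : Subgroup.zpowers (hElt g) ≤ Subgroup.center (TangentBundleGroup g) :=
    Subgroup.zpowers_le.2 (hElt_mem_center g)
  haveI hnorm : (Subgroup.zpowers (hElt g)).Normal := by
    constructor
    intro x hx y
    have hc := Subgroup.mem_center_iff.1 (hle hx) y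
    rw [hc, mul_assoc, mul_inv_cancel, mul_one]
    exact hx
  apply le_antisymm
  · exact Subgroup.normalClosure_le_normal (by
      intro x hx
      rw [Set.mem_singleton_iff] at hx
      subst hx
      exact Subgroup.mem_zpowers _)
  · exact Subgroup.zpowers_le.2 (h_mem_N1 g)

theorem center_eq_zpowers (m : ℕ) :
    Subgroup.center (TangentBundleGroup (m+2)) = Subgroup.zpowers (hElt (m+2)) := by
  apply le_antisymm
  · intro z hz
    have hc : toSurf (m+2) z ∈ Subgroup.center (SurfaceGroup (m+2)) := by
      rw [Subgroup.mem_center_iff]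
      intro y
      obtain ⟨y', rfl⟩ := toSurf_surjective (m+2) y
      rw [← map_mul, ← map_mul, Subgroup.mem_center_iff.1 hz y']
    rw [surface_center_eq_bot, Subgroup.mem_bot] at hc
    have h1 : z ∈ (toSurf (m+2)).ker := hc
    rwa [ker_toSurf, normalClosure_h_eq_zpowers] at h1
  · exact Subgroup.zpowers_le.2 (hElt_mem_center (m+2))

end TB

namespace TB

open SurfCenter

variable (g n : ℕ)

/-- quotient map onto `Γ̂ₙ`. -/
def mkN : TangentBundleGroup g →*
    (TangentBundleGroup g ⧸ Subgroup.normalClosure {hElt g ^ n}) :=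
  QuotientGroup.mk' _

lemma hn_mem : hElt g ^ n ∈ Subgroup.normalClosure {hElt g ^ n} :=
  Subgroup.subset_normalClosure rfl

lemma hbar_pow_n : (mkN g n (hElt g)) ^ n = 1 := by
  rw [← map_pow]
  exact (QuotientGroup.eq_one_iff _).2 (hn_mem g n)

def piN : (TangentBundleGroup g ⧸ Subgroup.normalClosure {hElt g ^ n}) →* SurfaceGroup g :=
  QuotientGroup.lift _ (toSurf g) <| by
    refine Subgroup.normalClosure_le_normal ?_
    intro x hx
    rw [Set.mem_singleton_iff] at hx
    subst hx
    rw [SetLike.mem_coe, MonoidHom.mem_ker, map_pow, toSurf_h, one_pow]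

lemma piN_mkN (x : TangentBundleGroup g) : piN g n (mkN g n x) = toSurf g x := rfl

def sigmaN (hdvd : n ∣ 2 * g - 2) :
    SurfaceGroup g →* (TangentBundleGroup g ⧸ Subgroup.normalClosure {hElt g ^ n}) :=
  PresentedGroup.toGroup (f := fun p => mkN g n (ofT g (some p))) <| by
    rintro r rfl
    show FreeGroup.lift (fun p => mkN g n (ofT g (some p))) (surfRel g) = 1
    rw [surfRel, map_comm_prod (FreeGroup.lift _)
      (fun i : Fin g => FreeGroup.of (i, false)) (fun i => FreeGroup.of (i, true))]
    have hfun : (fun i : Fin g =>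
        ⁅FreeGroup.lift (fun p => mkN g n (ofT g (some p))) (FreeGroup.of (i, false)),
          FreeGroup.lift (fun p => mkN g n (ofT g (some p))) (FreeGroup.of (i, true))⁆) =
        (fun i : Fin g =>
        ⁅mkN g n (ofT g (some (i, false))), mkN g n (ofT g (some (i, true)))⁆) := by
      funext i
      rw [FreeGroup.lift_apply_of, FreeGroup.lift_apply_of]
    rw [hfun, ← map_comm_prod (mkN g n)
      (fun i : Fin g => ofT g (some (i, false))) (fun i => ofT g (some (i, true))),
      main_rel g]
    obtain ⟨k, hk⟩ := hdvd
    rw [hk, pow_mul]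
    exact (QuotientGroup.eq_one_iff _).2 (pow_mem (hn_mem g n) k)

lemma piN_sigmaN (hdvd : n ∣ 2 * g - 2) :
    (piN g n).comp (sigmaN g n hdvd) = MonoidHom.id (SurfaceGroup g) := by
  apply PresentedGroup.ext
  intro p
  show piN g n ((sigmaN g n hdvd) (ofS g p)) = ofS g p
  have h1 : sigmaN g n hdvd (ofS g p) = mkN g n (ofT g (some p)) :=
    PresentedGroup.toGroup.of _
  rw [h1, piN_mkN]
  exact toSurf_of_some g p

/-- detection character `Γ̃ → ℤ/n`. -/
def chiTilde (hdvd : n ∣ 2 * g - 2) : TangentBundleGroup g →* Multiplicative (ZMod n) :=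
  PresentedGroup.toGroup
    (f := fun x : TBGen g =>
      Option.elim x (Multiplicative.ofAdd (1 : ZMod n)) (fun _ => 1)) <| by
    rintro r (rfl | ⟨x, rfl⟩)
    · rw [map_mul, map_inv, map_pow,
        map_comm_prod (FreeGroup.lift _) (aWord g) (bWord g)]
      have he : (List.ofFn fun i : Fin g =>
          ⁅FreeGroup.lift (fun x : TBGen g =>
              Option.elim x (Multiplicative.ofAdd (1 : ZMod n)) (fun _ => 1)) (aWord g i),
            FreeGroup.lift (fun x : TBGen g =>
              Option.elim x (Multiplicative.ofAdd (1 : ZMod n)) (fun _ => 1))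
              (bWord g i)⁆).prod = 1 := by
        apply List.prod_eq_one
        intro y hy
        obtain ⟨i, rfl⟩ := List.mem_ofFn.1 hy
        exact commutatorElement_eq_one_iff_commute.2 (Commute.all _ _)
      have hh : FreeGroup.lift (fun x : TBGen g =>
          Option.elim x (Multiplicative.ofAdd (1 : ZMod n)) (fun _ => 1)) (hWord g) =
          Multiplicative.ofAdd (1 : ZMod n) := FreeGroup.lift_apply_of
      rw [he, hh, one_mul, inv_eq_one, ← ofAdd_nsmul]
      have hz : ((2 * g - 2) • (1 : ZMod n)) = 0 := by
        rw [nsmul_eq_mul, mul_one]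
        exact (ZMod.natCast_eq_zero_iff _ _).2 hdvd
      rw [hz, ofAdd_zero]
    · rw [map_commutatorElement]
      exact commutatorElement_eq_one_iff_commute.2 (Commute.all _ _)

def chiN (hdvd : n ∣ 2 * g - 2) :
    (TangentBundleGroup g ⧸ Subgroup.normalClosure {hElt g ^ n}) →*
      Multiplicative (ZMod n) :=
  QuotientGroup.lift _ (chiTilde g n hdvd) <| by
    refine Subgroup.normalClosure_le_normal ?_
    intro x hx
    rw [Set.mem_singleton_iff] at hx
    subst hx
    rw [SetLike.mem_coe, MonoidHom.mem_ker, map_pow]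
    have h1 : chiTilde g n hdvd (hElt g) = Multiplicative.ofAdd (1 : ZMod n) :=
      PresentedGroup.toGroup.of _
    rw [h1, ← ofAdd_nsmul, nsmul_eq_mul, mul_one, ZMod.natCast_self, ofAdd_zero]

lemma hbar_pow_mod (a : ℕ) : (mkN g n (hElt g)) ^ a = (mkN g n (hElt g)) ^ (a % n) := by
  conv_lhs => rw [← Nat.div_add_mod a n]
  rw [pow_add, pow_mul, hbar_pow_n, one_pow, one_mul]

def iotaN [NeZero n] :
    Multiplicative (ZMod n) →*
      (TangentBundleGroup g ⧸ Subgroup.normalClosure {hElt g ^ n}) :=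
  MonoidHom.mk' (fun z => (mkN g n (hElt g)) ^ (Multiplicative.toAdd z).val) <| by
    intro x y
    show (mkN g n (hElt g)) ^ (Multiplicative.toAdd x + Multiplicative.toAdd y).val = _
    rw [ZMod.val_add, ← hbar_pow_mod, pow_add]

lemma chiN_iotaN [NeZero n] (hdvd : n ∣ 2 * g - 2) (z : Multiplicative (ZMod n)) :
    chiN g n hdvd (iotaN g n z) = z := by
  show chiN g n hdvd ((mkN g n (hElt g)) ^ (Multiplicative.toAdd z).val) = z
  have h0 : chiN g n hdvd (mkN g n (hElt g)) = chiTilde g n hdvd (hElt g) := rfl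
  have h1 : chiTilde g n hdvd (hElt g) = Multiplicative.ofAdd (1 : ZMod n) :=
    PresentedGroup.toGroup.of _
  rw [map_pow, h0, h1, ← ofAdd_nsmul, nsmul_eq_mul, mul_one, ZMod.natCast_val, ZMod.cast_id]
  exact ofAdd_toAdd z

lemma iotaN_injective [NeZero n] (hdvd : n ∣ 2 * g - 2) :
    Function.Injective (iotaN g n) := by
  intro u v huv
  have h1 := chiN_iotaN g n hdvd u
  rw [huv, chiN_iotaN g n hdvd v] at h1
  exact h1.symm

lemma hbar_mem_center :
    mkN g n (hElt g) ∈ Subgroup.center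
      (TangentBundleGroup g ⧸ Subgroup.normalClosure {hElt g ^ n}) := by
  rw [Subgroup.mem_center_iff]
  intro y
  obtain ⟨y', rfl⟩ := QuotientGroup.mk'_surjective _ y
  show mkN g n y' * mkN g n (hElt g) = mkN g n (hElt g) * mkN g n y'
  rw [← map_mul, ← map_mul, Subgroup.mem_center_iff.1 (hElt_mem_center g) y']

lemma iotaN_center [NeZero n] (z : Multiplicative (ZMod n)) :
    iotaN g n z ∈ Subgroup.center
      (TangentBundleGroup g ⧸ Subgroup.normalClosure {hElt g ^ n}) :=
  pow_mem (hbar_mem_center g n) _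

lemma hbar_zpow_congr (a b : ℤ) (h : (n : ℤ) ∣ a - b) :
    (mkN g n (hElt g)) ^ a = (mkN g n (hElt g)) ^ b := by
  obtain ⟨t, ht⟩ := h
  have ha : a = b + n * t := by omega
  rw [ha, zpow_add, zpow_mul, zpow_natCast, hbar_pow_n, one_zpow, mul_one]

lemma ker_piN_eq [NeZero n] (hdvd : n ∣ 2 * g - 2) :
    (piN g n).ker = (iotaN g n).range := by
  apply le_antisymm
  · intro x hx
    rw [MonoidHom.mem_ker] at hx
    obtain ⟨x', rfl⟩ := QuotientGroup.mk'_surjective _ x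
    have h1 : toSurf g x' = 1 := hx
    have h2 : x' ∈ Subgroup.zpowers (hElt g) := by
      rw [← normalClosure_h_eq_zpowers, ← ker_toSurf]
      exact h1
    obtain ⟨k, hk⟩ := Subgroup.mem_zpowers_iff.1 h2
    refine ⟨Multiplicative.ofAdd ((k : ZMod n)), ?_⟩
    have hdvd2 : (n : ℤ) ∣ ((((k : ZMod n)).val : ℤ)) - k := by
      rw [ZMod.val_intCast]
      exact ⟨-(k / n), by rw [Int.emod_def]; ring⟩
    have e0 : (mkN g n (hElt g)) ^ ((((k : ZMod n)).val : ℕ)) =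
        (mkN g n (hElt g)) ^ ((((k : ZMod n)).val : ℕ) : ℤ) := (zpow_natCast _ _).symm
    have e1 : (mkN g n (hElt g)) ^ ((((k : ZMod n)).val : ℕ) : ℤ) =
        (mkN g n (hElt g)) ^ k := hbar_zpow_congr g n _ _ hdvd2
    have e2 : (mkN g n (hElt g)) ^ k = mkN g n (hElt g ^ k) := (map_zpow _ _ _).symm
    show (mkN g n (hElt g)) ^
      (Multiplicative.toAdd (Multiplicative.ofAdd ((k : ZMod n)))).val = _
    rw [toAdd_ofAdd, e0, e1, e2, hk]
    rfl
  · rintro x ⟨z, rfl⟩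
    rw [MonoidHom.mem_ker]
    show piN g n ((mkN g n (hElt g)) ^ (Multiplicative.toAdd z).val) = 1
    rw [map_pow, piN_mkN, toSurf_h, one_pow]

lemma piN_surjective (hdvd : n ∣ 2 * g - 2) : Function.Surjective (piN g n) := by
  intro y
  refine ⟨sigmaN g n hdvd y, ?_⟩
  have h1 := DFunLike.congr_fun (piN_sigmaN g n hdvd) y
  simpa using h1

end TB


/-- In `Γ̃ = ⟨h, aᵢ, bᵢ ∣ ∏[aᵢ,bᵢ] = h^{2g−2}, h central⟩` with `g ≥ 2`:
`h` generates the center; the quotient by `⟨h⟩` is the surface group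
`π₁(Σ_g)`; and for `n ∣ 2g−2` the quotient `Γ̂ₙ = Γ̃/⟨⟨hⁿ⟩⟩` is a central
extension `0 → ℤ/nℤ → Γ̂ₙ → π₁(Σ_g) → 1` which splits. -/
theorem tangent_bundle_group_center_quotient_and_split_extension
    (g n : ℕ) (hg : 2 ≤ g) (hn : 0 < n) (hdvd : n ∣ 2 * g - 2) :
    Subgroup.center (TangentBundleGroup g) = Subgroup.zpowers (hElt g) ∧
    Nonempty
      ((TangentBundleGroup g ⧸ Subgroup.normalClosure {hElt g}) ≃* SurfaceGroup g) ∧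
    ∃ (ι : Multiplicative (ZMod n) →*
          TangentBundleGroup g ⧸ Subgroup.normalClosure {hElt g ^ n})
      (π : (TangentBundleGroup g ⧸ Subgroup.normalClosure {hElt g ^ n}) →*
          SurfaceGroup g),
      Function.Injective ι ∧
      (∀ z, ι z ∈ Subgroup.center _) ∧
      Function.Surjective π ∧
      π.ker = ι.range ∧
      ∃ σ : SurfaceGroup g →*
          TangentBundleGroup g ⧸ Subgroup.normalClosure {hElt g ^ n},
        π.comp σ = MonoidHom.id (SurfaceGroup g) := by
  haveI : NeZero n := ⟨hn.ne'⟩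
  obtain ⟨m, rfl⟩ : ∃ m, g = m + 2 := ⟨g - 2, by omega⟩
  refine ⟨TB.center_eq_zpowers m, ⟨TB.quotEquivSurf (m+2)⟩,
    TB.iotaN (m+2) n, TB.piN (m+2) n,
    TB.iotaN_injective (m+2) n hdvd,
    TB.iotaN_center (m+2) n,
    TB.piN_surjective (m+2) n hdvd,
    TB.ker_piN_eq (m+2) n hdvd,
    TB.sigmaN (m+2) n hdvd,
    TB.piN_sigmaN (m+2) n hdvd⟩
end
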